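/- arXiv:2109.12593 — 6 statements merged into one kernel-verified Lean document; each statement's English description precedes it below -/
import Mathlib

section
/- Let G be a finite group, let S be a subgroup of G, and let N be a normal subgroup of G. Then m(G,S,N) = ([N_G(SN):SN] / [N_G(S):S]) · m(S, S∩N) · m°(G,S,N). -/
open scoped Classical

/-- The Möbius function of the lattice of subgroups of a finite group,
with values in `ℚ`. -/
noncomputable def subgroupMoebius (G : Type*) [Group G] [Finite G]
    (A B : Subgroup G) : ℚ :=
  letI : Fintype (Subgroup G) := Fintype.ofFinite _
  letI : LocallyFiniteOrder (Subgroup G) := Fintype.toLocallyFiniteOrder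
  IncidenceAlgebra.mu ℚ A B

/-- The constant `m°(G,S,N) = Σ μ(V,G)`, the sum running over all subgroups `V`
of `G` with `S ≤ V ≤ G` and `VN = G`. -/
noncomputable def mCirc (G : Type*) [Group G] [Finite G] (S N : Subgroup G) : ℚ :=
  letI : Fintype (Subgroup G) := Fintype.ofFinite _
  ∑ V ∈ Finset.univ.filter (fun V : Subgroup G => S ≤ V ∧ V ⊔ N = ⊤),
    subgroupMoebius G V ⊤

/-- The constant `m(G,S,N) = (|N_G(SN)| / (|SN|·|N_G(S)|)) · Σ |U| μ(U,S) μ(V,G)`,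
the sum running over pairs `(U,V)` with `U ≤ S ≤ V ≤ G`, `VN = G`, `UN = SN`. -/
noncomputable def mSlice (G : Type*) [Group G] [Finite G] (S N : Subgroup G) : ℚ :=
  letI : Fintype (Subgroup G) := Fintype.ofFinite _
  ((Nat.card (Subgroup.normalizer ((S ⊔ N : Subgroup G) : Set G)) : ℚ) /
      ((Nat.card (S ⊔ N : Subgroup G) : ℚ) * (Nat.card (Subgroup.normalizer (S : Set G)) : ℚ))) *
    ∑ U ∈ Finset.univ.filter (fun U : Subgroup G => U ≤ S ∧ U ⊔ N = S ⊔ N),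
      ∑ V ∈ Finset.univ.filter (fun V : Subgroup G => S ≤ V ∧ V ⊔ N = ⊤),
        (Nat.card U : ℚ) * subgroupMoebius G U S * subgroupMoebius G V ⊤

/-- Bouc's constant `m(G,N) = (1/|G|) Σ_{X ≤ G, XN = G} |X| μ(X,G)`. -/
noncomputable def mBouc (G : Type*) [Group G] [Finite G] (N : Subgroup G) : ℚ :=
  letI : Fintype (Subgroup G) := Fintype.ofFinite _
  (1 / (Nat.card G : ℚ)) *
    ∑ X ∈ Finset.univ.filter (fun X : Subgroup G => X ⊔ N = ⊤),
      (Nat.card X : ℚ) * subgroupMoebius G X ⊤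

section MuTransfer

variable {α β : Type*} [PartialOrder α] [LocallyFiniteOrder α]
  [PartialOrder β] [LocallyFiniteOrder β] [DecidableEq α] [DecidableEq β]

lemma mu_orderEmbedding_aux (f : α ↪o β) :
    ∀ n (a b : α), (Finset.Icc a b).card = n →
      (∀ c, f a ≤ c → c ≤ f b → ∃ d, f d = c) →
      IncidenceAlgebra.mu ℚ (f a) (f b) = IncidenceAlgebra.mu ℚ a b := by
  intro n
  induction n using Nat.strong_induction_on with
  | _ n ih =>
    intro a b hn hs
    rcases eq_or_ne a b with rfl | hab
    · simp
    have hfab : f a ≠ f b := fun h => hab (f.injective h)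
    rw [IncidenceAlgebra.mu_eq_neg_sum_Ico_of_ne hab,
      IncidenceAlgebra.mu_eq_neg_sum_Ico_of_ne hfab]
    congr 1
    refine (Finset.sum_bij (fun x _ => f x) ?_ ?_ ?_ ?_).symm
    · intro x hx
      rw [Finset.mem_Ico] at hx ⊢
      exact ⟨f.le_iff_le.2 hx.1, f.lt_iff_lt.2 hx.2⟩
    · intro x _ y _ h
      exact f.injective h
    · intro y hy
      rw [Finset.mem_Ico] at hy
      obtain ⟨d, rfl⟩ := hs y hy.1 hy.2.le
      exact ⟨d, Finset.mem_Ico.2 ⟨f.le_iff_le.1 hy.1, f.lt_iff_lt.1 hy.2⟩, rfl⟩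
    · intro x hx
      rw [Finset.mem_Ico] at hx
      refine (ih (Finset.Icc a x).card ?_ a x rfl fun c h1 h2 => hs c h1
        (h2.trans (f.le_iff_le.2 hx.2.le))).symm
      rw [← hn]
      exact Finset.card_lt_card
        (Finset.Icc_ssubset_Icc_right (hx.1.trans hx.2.le) le_rfl hx.2)

lemma mu_orderEmbedding (f : α ↪o β) (a b : α)
    (hs : ∀ c, f a ≤ c → c ≤ f b → ∃ d, f d = c) :
    IncidenceAlgebra.mu ℚ (f a) (f b) = IncidenceAlgebra.mu ℚ a b :=
  mu_orderEmbedding_aux f _ a b rfl hs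

end MuTransfer

section SubgroupLemmas

variable {G : Type*} [Group G]

/-- `map` along the subtype inclusion as an order embedding. -/
def mapSubtypeEmb (S : Subgroup G) : Subgroup ↥S ↪o Subgroup G :=
  OrderEmbedding.ofMapLEIff (fun X => X.map S.subtype)
    (fun _ _ => Subgroup.map_le_map_iff_of_injective S.subtype_injective)

lemma map_top_subtype (S : Subgroup G) : (⊤ : Subgroup ↥S).map S.subtype = S := by
  rw [← MonoidHom.range_eq_map, Subgroup.range_subtype]

lemma subgroupMoebius_map [Finite G] (S : Subgroup G) (X : Subgroup ↥S) :
    subgroupMoebius G (X.map S.subtype) S = subgroupMoebius ↥S X ⊤ := by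
  unfold subgroupMoebius
  letI : Fintype (Subgroup G) := Fintype.ofFinite _
  letI : Fintype (Subgroup ↥S) := Fintype.ofFinite _
  letI : LocallyFiniteOrder (Subgroup G) := Fintype.toLocallyFiniteOrder
  letI : LocallyFiniteOrder (Subgroup ↥S) := Fintype.toLocallyFiniteOrder
  have h := mu_orderEmbedding (mapSubtypeEmb S) X ⊤ (by
    intro c h1 h2
    refine ⟨c.subgroupOf S, ?_⟩
    show (c.subgroupOf S).map S.subtype = c
    rw [Subgroup.subgroupOf_map_subtype, inf_eq_left]
    rw [← map_top_subtype S]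
    exact h2)
  rwa [show (mapSubtypeEmb S) ⊤ = S from map_top_subtype S] at h

lemma sup_cond (S N U : Subgroup G) [N.Normal] (hU : U ≤ S) :
    U ⊔ N = S ⊔ N ↔ U ⊔ (N ⊓ S) = S := by
  constructor
  · intro h
    refine le_antisymm (sup_le hU inf_le_right) ?_
    intro s hs
    have h1 : s ∈ ((U ⊔ N : Subgroup G) : Set G) := by
      rw [h]; exact Subgroup.mem_sup_left hs
    rw [Subgroup.mul_normal] at h1
    obtain ⟨u, hu, n, hn, rfl⟩ := h1
    have hnS : n ∈ N ⊓ S := ⟨hn, by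
      have := mul_mem (inv_mem (hU hu)) hs
      simpa using this⟩
    exact mul_mem (Subgroup.mem_sup_left hu) (Subgroup.mem_sup_right hnS)
  · intro h
    conv_rhs => rw [← h]
    rw [sup_assoc, sup_comm (N ⊓ S) N, sup_inf_self]

lemma sup_cond2 (S N U : Subgroup G) (hU : U ≤ S) :
    U.subgroupOf S ⊔ N.subgroupOf S = ⊤ ↔ U ⊔ (N ⊓ S) = S := by
  rw [← (Subgroup.map_injective S.subtype_injective).eq_iff, Subgroup.map_sup,
    Subgroup.subgroupOf_map_subtype, Subgroup.subgroupOf_map_subtype,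
    inf_eq_left.mpr hU, map_top_subtype]

lemma relindex_mul_card_of_le (H K : Subgroup G) [Finite G] (hHK : H ≤ K) :
    H.relIndex K * Nat.card H = Nat.card K := by
  have h1 := Subgroup.index_mul_card (G := ↥K) (H := H.subgroupOf K)
  rwa [show Nat.card (H.subgroupOf K) = Nat.card H from
    Nat.card_congr (Subgroup.subgroupOfEquivOfLe hHK).toEquiv] at h1

end SubgroupLemmas

/-- m(G,S,N) = ([N_G(SN):SN] / [N_G(S):S]) · m(S, S∩N) · m°(G,S,N). -/
theorem mSlice_factorization (G : Type*) [Group G] [Finite G] (S N : Subgroup G)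
    [N.Normal] :
    mSlice G S N =
      (((S ⊔ N).relIndex (Subgroup.normalizer ((S ⊔ N : Subgroup G) : Set G)) : ℚ) / (S.relIndex (Subgroup.normalizer (S : Set G)) : ℚ)) *
        mBouc ↥S (N.subgroupOf S) * mCirc G S N := by
  unfold mSlice mBouc mCirc
  letI : Fintype (Subgroup G) := Fintype.ofFinite _
  letI : Fintype (Subgroup ↥S) := Fintype.ofFinite _
  -- the U-sum transfers to an X-sum over subgroups of S
  have hsum : ∑ U ∈ Finset.univ.filter (fun U : Subgroup G => U ≤ S ∧ U ⊔ N = S ⊔ N),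
      (Nat.card U : ℚ) * subgroupMoebius G U S
      = ∑ X ∈ Finset.univ.filter (fun X : Subgroup ↥S => X ⊔ N.subgroupOf S = ⊤),
      (Nat.card X : ℚ) * subgroupMoebius ↥S X ⊤ := by
    refine Finset.sum_nbij' (fun U => U.subgroupOf S) (fun X => X.map S.subtype)
      ?_ ?_ ?_ ?_ ?_
    · intro U hU
      rw [Finset.mem_filter] at hU ⊢
      refine ⟨Finset.mem_univ _, ?_⟩
      rw [sup_cond2 S N U hU.2.1, ← sup_cond S N U hU.2.1]
      exact hU.2.2
    · intro X hX
      rw [Finset.mem_filter] at hX ⊢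
      refine ⟨Finset.mem_univ _, Subgroup.map_subtype_le X, ?_⟩
      have hle : X.map S.subtype ≤ S := Subgroup.map_subtype_le X
      rw [sup_cond S N _ hle, ← sup_cond2 S N _ hle]
      have hXX : (X.map S.subtype).subgroupOf S = X := by
        show Subgroup.comap S.subtype (Subgroup.map S.subtype X) = X
        exact Subgroup.comap_map_eq_self_of_injective S.subtype_injective X
      rw [hXX]
      exact hX.2
    · intro U hU
      rw [Finset.mem_filter] at hU
      show (U.subgroupOf S).map S.subtype = U
      rw [Subgroup.subgroupOf_map_subtype, inf_eq_left.mpr hU.2.1]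
    · intro X _
      show (X.map S.subtype).subgroupOf S = X
      exact Subgroup.comap_map_eq_self_of_injective S.subtype_injective X
    · intro U hU
      rw [Finset.mem_filter] at hU
      have hc : Nat.card (U.subgroupOf S) = Nat.card U :=
        Nat.card_congr (Subgroup.subgroupOfEquivOfLe hU.2.1).toEquiv
      have hm : subgroupMoebius G U S = subgroupMoebius ↥S (U.subgroupOf S) ⊤ := by
        have := subgroupMoebius_map S (U.subgroupOf S)
        rwa [Subgroup.subgroupOf_map_subtype, inf_eq_left.mpr hU.2.1] at this
      rw [hc, hm]
  have step1 : ∀ (AU : Finset (Subgroup G)) (AV : Finset (Subgroup G)),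
      (∑ U ∈ AU, ∑ V ∈ AV, (Nat.card U : ℚ) * subgroupMoebius G U S *
        subgroupMoebius G V ⊤)
      = (∑ U ∈ AU, (Nat.card U : ℚ) * subgroupMoebius G U S) *
        (∑ V ∈ AV, subgroupMoebius G V ⊤) := by
    intro AU AV
    rw [Finset.sum_mul]
    exact Finset.sum_congr rfl fun U _ => by rw [Finset.mul_sum]
  rw [step1, hsum]
  -- prefactor arithmetic
  have e1 := relindex_mul_card_of_le (S ⊔ N) (Subgroup.normalizer ((S ⊔ N : Subgroup G) : Set G)) Subgroup.le_normalizer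
  have e2 := relindex_mul_card_of_le S (Subgroup.normalizer (S : Set G)) Subgroup.le_normalizer
  have hq1 : ((S ⊔ N).relIndex (Subgroup.normalizer ((S ⊔ N : Subgroup G) : Set G)) : ℚ) *
      (Nat.card (S ⊔ N : Subgroup G) : ℚ) = (Nat.card (Subgroup.normalizer ((S ⊔ N : Subgroup G) : Set G)) : ℚ) := by
    exact_mod_cast congrArg (Nat.cast : ℕ → ℚ) e1
  have hq2 : (S.relIndex (Subgroup.normalizer (S : Set G)) : ℚ) * (Nat.card S : ℚ)
      = (Nat.card (Subgroup.normalizer (S : Set G)) : ℚ) := by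
    exact_mod_cast congrArg (Nat.cast : ℕ → ℚ) e2
  have hSN : (Nat.card (S ⊔ N : Subgroup G) : ℚ) ≠ 0 := by
    exact_mod_cast Nat.card_pos.ne'
  have hS : (Nat.card S : ℚ) ≠ 0 := by
    exact_mod_cast Nat.card_pos.ne'
  have hN2 : (Nat.card (Subgroup.normalizer (S : Set G)) : ℚ) ≠ 0 := by
    exact_mod_cast Nat.card_pos.ne'
  have hr2 : (S.relIndex (Subgroup.normalizer (S : Set G)) : ℚ) ≠ 0 := by
    intro h
    rw [h, zero_mul] at hq2
    exact hN2 hq2.symm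
  have hP : (Nat.card (Subgroup.normalizer ((S ⊔ N : Subgroup G) : Set G)) : ℚ) /
      ((Nat.card (S ⊔ N : Subgroup G) : ℚ) * (Nat.card (Subgroup.normalizer (S : Set G)) : ℚ))
      = (((S ⊔ N).relIndex (Subgroup.normalizer ((S ⊔ N : Subgroup G) : Set G)) : ℚ) / (S.relIndex (Subgroup.normalizer (S : Set G)) : ℚ)) *
        (1 / (Nat.card ↥S : ℚ)) := by
    rw [← hq1, ← hq2]
    field_simp
  rw [hP]
  ring
end

section
/- Let G be a finite group and let N be a nontrivial minimal normal subgroup of G which is abelian. Then Σ_{X ≤ G, XN = G} μ(X,G) = 1 − |K_G(N)|, where K_G(N) is the set of complements of N in G; consequently m(G,1,N) = (1 − |K_G(N)|)/|N|. -/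
open scoped Classical

set_option linter.unusedSectionVars false

lemma mu_of_covby {α : Type*} [PartialOrder α] [LocallyFiniteOrder α] [DecidableEq α]
    {a b : α} (h : a ⋖ b) : IncidenceAlgebra.mu ℚ a b = -1 := by
  rw [IncidenceAlgebra.mu_eq_neg_sum_Ioc_of_ne h.ne]
  have hIoc : Finset.Ioc a b = {b} := by
    ext x
    simp only [Finset.mem_Ioc, Finset.mem_singleton]
    constructor
    · rintro ⟨h1, h2⟩
      rcases h2.lt_or_eq with h2 | h2
      · exact absurd h2 (h.2 h1)
      · exact h2
    · rintro rfl; exact ⟨h.lt, le_rfl⟩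
  rw [hIoc, Finset.sum_singleton, IncidenceAlgebra.mu_self]

section Aux
variable {G : Type*} [Group G] [Finite G] (N : Subgroup G) [N.Normal]

/-- If `V ⊔ N = ⊤` and `V ≠ ⊤`, with `N` minimal normal and abelian, then `V ⊓ N = ⊥`. -/
lemma aux_inf_eq_bot
    (hmin : ∀ K : Subgroup G, K.Normal → K ≤ N → K = ⊥ ∨ K = N)
    (habel : ∀ x ∈ N, ∀ y ∈ N, x * y = y * x)
    (V : Subgroup G) (hsup : V ⊔ N = ⊤) (hne : V ≠ ⊤) : V ⊓ N = ⊥ := by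
  have hnormal : (V ⊓ N).Normal := by
    constructor
    intro n hn g
    have hg : g ∈ V ⊔ N := by rw [hsup]; trivial
    rw [← SetLike.mem_coe, Subgroup.mul_normal] at hg
    obtain ⟨v, hv, m, hm, rfl⟩ := hg
    have h1 : m * (n * m⁻¹) = n := by
      rw [habel m hm (n * m⁻¹) (mul_mem hn.2 (inv_mem hm))]
      group
    have : v * m * n * (v * m)⁻¹ = v * n * v⁻¹ := by
      rw [mul_inv_rev, show v * m * n * (m⁻¹ * v⁻¹) = v * (m * (n * m⁻¹)) * v⁻¹ by group, h1]
    rw [this]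
    exact ⟨V.mul_mem (V.mul_mem hv hn.1) (inv_mem hv),
      Subgroup.Normal.conj_mem ‹N.Normal› n hn.2 v⟩
  rcases hmin _ hnormal inf_le_right with h | h
  · exact h
  · exfalso
    apply hne
    have hNV : N ≤ V := h ▸ inf_le_left
    rw [← hsup, sup_eq_left.mpr hNV]

lemma aux_eq_of_le (V W : Subgroup G) (hVsup : V ⊔ N = ⊤) (hW : W ⊓ N = ⊥)
    (hVW : V ≤ W) : W = V := by
  refine le_antisymm (fun w hw => ?_) hVW
  have : w ∈ V ⊔ N := by rw [hVsup]; trivial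
  rw [← SetLike.mem_coe, Subgroup.mul_normal] at this
  obtain ⟨v, hv, n, hn, rfl⟩ := this
  have : n ∈ W ⊓ N := ⟨by
    have : n = v⁻¹ * (v * n) := by group
    rw [this]; exact W.mul_mem (inv_mem (hVW hv)) hw, hn⟩
  rw [hW, Subgroup.mem_bot] at this
  simpa [this] using hv

lemma aux_covby (hN : N ≠ ⊥)
    (hmin : ∀ K : Subgroup G, K.Normal → K ≤ N → K = ⊥ ∨ K = N)
    (habel : ∀ x ∈ N, ∀ y ∈ N, x * y = y * x)
    (V : Subgroup G) (hsup : V ⊔ N = ⊤) (hinf : V ⊓ N = ⊥) : V ⋖ ⊤ := by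
  have hVne : V ≠ ⊤ := by
    rintro rfl
    exact hN (by simpa using hinf)
  refine ⟨lt_top_iff_ne_top.mpr hVne, fun W hVW hWtop => ?_⟩
  have hWsup : W ⊔ N = ⊤ := top_le_iff.mp (hsup ▸ sup_le_sup_right hVW.le N)
  have hWinf : W ⊓ N = ⊥ :=
    aux_inf_eq_bot N hmin habel W hWsup (lt_top_iff_ne_top.mp hWtop)
  exact absurd (aux_eq_of_le N V W hsup hWinf hVW.le) (ne_of_gt hVW)

lemma subgroupMoebius_self (A : Subgroup G) : subgroupMoebius G A A = 1 := by
  letI : Fintype (Subgroup G) := Fintype.ofFinite _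
  letI : LocallyFiniteOrder (Subgroup G) := Fintype.toLocallyFiniteOrder
  unfold subgroupMoebius
  exact IncidenceAlgebra.mu_self A

lemma mu_top_of_covby {V : Subgroup G} (h : V ⋖ (⊤ : Subgroup G)) :
    subgroupMoebius G V ⊤ = -1 := by
  letI : Fintype (Subgroup G) := Fintype.ofFinite _
  letI : LocallyFiniteOrder (Subgroup G) := Fintype.toLocallyFiniteOrder
  unfold subgroupMoebius
  exact mu_of_covby h

/-- The key count: the sum of `μ(V, G)` over `V` with `VN = G`. -/
lemma circ_sum [Fintype (Subgroup G)] (hN : N ≠ ⊥)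
    (hmin : ∀ K : Subgroup G, K.Normal → K ≤ N → K = ⊥ ∨ K = N)
    (habel : ∀ x ∈ N, ∀ y ∈ N, x * y = y * x) :
    ∑ V ∈ Finset.univ.filter (fun V : Subgroup G => ⊥ ≤ V ∧ V ⊔ N = ⊤),
        subgroupMoebius G V ⊤
      = 1 - (Nat.card {X : Subgroup G // X ⊔ N = ⊤ ∧ X ⊓ N = ⊥} : ℚ) := by
  classical
  set s : Finset (Subgroup G) :=
    Finset.univ.filter (fun V : Subgroup G => ⊥ ≤ V ∧ V ⊔ N = ⊤) with hs
  have htop : (⊤ : Subgroup G) ∈ s := by simp [hs]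
  rw [← Finset.add_sum_erase _ _ htop, subgroupMoebius_self]
  have herase : ∀ V ∈ s.erase ⊤, subgroupMoebius G V ⊤ = -1 := by
    intro V hV
    rw [Finset.mem_erase, hs, Finset.mem_filter] at hV
    have hinf := aux_inf_eq_bot N hmin habel V hV.2.2.2 hV.1
    exact mu_top_of_covby (aux_covby N hN hmin habel V hV.2.2.2 hinf)
  rw [Finset.sum_congr rfl herase, Finset.sum_const]
  have hset : s.erase ⊤ =
      Finset.univ.filter (fun X : Subgroup G => X ⊔ N = ⊤ ∧ X ⊓ N = ⊥) := by
    ext X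
    rw [Finset.mem_erase, hs, Finset.mem_filter, Finset.mem_filter]
    constructor
    · rintro ⟨hne, -, -, hsup⟩
      exact ⟨Finset.mem_univ X, hsup, aux_inf_eq_bot N hmin habel X hsup hne⟩
    · rintro ⟨-, hsup, hinf⟩
      refine ⟨fun h => hN ?_, Finset.mem_univ X, bot_le, hsup⟩
      rw [h, top_inf_eq] at hinf
      exact hinf
  have hcard : (Nat.card {X : Subgroup G // X ⊔ N = ⊤ ∧ X ⊓ N = ⊥} : ℚ)
      = ((Finset.univ.filter
          (fun X : Subgroup G => X ⊔ N = ⊤ ∧ X ⊓ N = ⊥)).card : ℚ) := by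
    rw [Nat.card_eq_fintype_card, Fintype.card_subtype]
  rw [hset, hcard]
  simp only [nsmul_eq_mul]
  ring

lemma slice_sum [Fintype (Subgroup G)] :
    ((Nat.card (Subgroup.normalizer (((⊥ : Subgroup G) ⊔ N : Subgroup G) : Set G)) : ℚ) /
        ((Nat.card ((⊥ : Subgroup G) ⊔ N : Subgroup G) : ℚ) *
          (Nat.card (Subgroup.normalizer ((⊥ : Subgroup G) : Set G)) : ℚ))) *
      ∑ U ∈ Finset.univ.filter
          (fun U : Subgroup G => U ≤ (⊥ : Subgroup G) ∧ U ⊔ N = (⊥ : Subgroup G) ⊔ N),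
        ∑ V ∈ Finset.univ.filter (fun V : Subgroup G => (⊥ : Subgroup G) ≤ V ∧ V ⊔ N = ⊤),
          (Nat.card U : ℚ) * subgroupMoebius G U ⊥ * subgroupMoebius G V ⊤
      = (1 / (Nat.card N : ℚ)) *
        ∑ V ∈ Finset.univ.filter (fun V : Subgroup G => (⊥ : Subgroup G) ≤ V ∧ V ⊔ N = ⊤),
          subgroupMoebius G V ⊤ := by
  classical
  have hGcard : (Nat.card G : ℚ) ≠ 0 := Nat.cast_ne_zero.mpr Nat.card_pos.ne'
  have hNcard : (Nat.card N : ℚ) ≠ 0 := Nat.cast_ne_zero.mpr Nat.card_pos.ne'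
  have h1 : (⊥ : Subgroup G) ⊔ N = N := bot_sup_eq N
  have h2 : Subgroup.normalizer (N : Set G) = ⊤ := Subgroup.normalizer_eq_top_iff.mpr ‹N.Normal›
  have h3 : Subgroup.normalizer ((⊥ : Subgroup G) : Set G) = ⊤ :=
    Subgroup.normalizer_eq_top_iff.mpr inferInstance
  have hfilterU : Finset.univ.filter
      (fun U : Subgroup G => U ≤ (⊥ : Subgroup G) ∧ U ⊔ N = (⊥ : Subgroup G) ⊔ N)
      = {(⊥ : Subgroup G)} := by
    ext U
    rw [Finset.mem_filter, Finset.mem_singleton]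
    constructor
    · rintro ⟨-, h, -⟩
      exact le_bot_iff.mp h
    · rintro rfl
      exact ⟨Finset.mem_univ _, le_rfl, rfl⟩
  rw [hfilterU, Finset.sum_singleton, h1, h2, h3, Subgroup.card_top,
    subgroupMoebius_self, Finset.mul_sum, Finset.mul_sum]
  refine Finset.sum_congr rfl fun V _ => ?_
  rw [Subgroup.card_bot]
  push_cast
  field_simp

end Aux

/-- For a nontrivial minimal abelian normal subgroup N of G,
Σ_{XN=G} μ(X,G) = 1 − |K_G(N)|, hence m(G,1,N) = (1 − |K_G(N)|)/|N|. -/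
theorem mSlice_bot_of_minimal_abelian_normal (G : Type*) [Group G] [Finite G]
    (N : Subgroup G) [N.Normal] (hN : N ≠ ⊥)
    (hmin : ∀ K : Subgroup G, K.Normal → K ≤ N → K = ⊥ ∨ K = N)
    (habel : ∀ x ∈ N, ∀ y ∈ N, x * y = y * x) :
    mCirc G ⊥ N =
        1 - (Nat.card {X : Subgroup G // X ⊔ N = ⊤ ∧ X ⊓ N = ⊥} : ℚ) ∧
      mSlice G ⊥ N =
        (1 - (Nat.card {X : Subgroup G // X ⊔ N = ⊤ ∧ X ⊓ N = ⊥} : ℚ)) /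
          (Nat.card N : ℚ) := by
  have hNcard : (Nat.card N : ℚ) ≠ 0 := Nat.cast_ne_zero.mpr Nat.card_pos.ne'
  have hmain : mCirc G ⊥ N =
      1 - (Nat.card {X : Subgroup G // X ⊔ N = ⊤ ∧ X ⊓ N = ⊥} : ℚ) := by
    unfold mCirc
    exact @circ_sum G _ _ N _ (Fintype.ofFinite _) hN hmin habel
  have hslice : mSlice G ⊥ N = (1 / (Nat.card N : ℚ)) * mCirc G ⊥ N := by
    unfold mSlice mCirc
    exact @slice_sum G _ _ N _ (Fintype.ofFinite _)
  refine ⟨hmain, ?_⟩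
  rw [hslice, hmain]
  field_simp
end

section
/- Let G be a finite group, let S be a subgroup of G, and let N be a normal subgroup of G. Then m°(G,S,N) = m°(G/Φ(G), SΦ(G)/Φ(G), NΦ(G)/Φ(G)), where Φ(G) is the Frattini subgroup of G and the right-hand side is computed in the quotient group G/Φ(G) with its Möbius function. -/
open scoped Classical

open Finset IncidenceAlgebra

section Generic
variable {α β : Type*}

/-- Transport of the Möbius function along an interval-preserving order embedding. -/
private lemma mu_map_aux [PartialOrder α] [PartialOrder β] [LocallyFiniteOrder α]
    [LocallyFiniteOrder β] [DecidableEq α] [DecidableEq β]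
    (f : α → β) (hinj : Function.Injective f) (hle : ∀ a b : α, f a ≤ f b ↔ a ≤ b)
    (hIcc : ∀ a b : α, (Finset.Icc a b).image f = Finset.Icc (f a) (f b)) :
    ∀ (n : ℕ) (a b : α), (Finset.Icc a b).card ≤ n →
      IncidenceAlgebra.mu ℚ (f a) (f b) = IncidenceAlgebra.mu ℚ a b := by
  intro n
  induction n with
  | zero =>
    intro a b hcard
    have hab : ¬ a ≤ b := by
      intro h
      have : b ∈ Finset.Icc a b := Finset.mem_Icc.2 ⟨h, le_rfl⟩
      have := Finset.card_pos.2 ⟨b, this⟩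
      omega
    rw [apply_eq_zero_of_not_le hab, apply_eq_zero_of_not_le fun h => hab ((hle a b).1 h)]
  | succ n ih =>
    intro a b hcard
    by_cases hab : a = b
    · subst hab; simp
    by_cases hab' : a ≤ b
    · rw [mu_apply, mu_apply, if_neg hab, if_neg (fun h => hab (hinj h))]
      have hIco : Finset.Ico (f a) (f b) = (Finset.Ico a b).image f := by
        rw [← Finset.Icc_erase_right, ← Finset.Icc_erase_right, ← hIcc,
          Finset.image_erase hinj]
      rw [hIco, Finset.sum_image (fun x _ y _ h => hinj h)]
      congr 1
      refine Finset.sum_congr rfl fun x hx => ?_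
      have hx' := Finset.mem_Ico.1 hx
      have hss : Finset.Icc a x ⊂ Finset.Icc a b :=
        Finset.Icc_ssubset_Icc_right hab' le_rfl hx'.2
      have := Finset.card_lt_card hss
      exact ih a x (by omega)
    · rw [apply_eq_zero_of_not_le hab', apply_eq_zero_of_not_le fun h => hab' ((hle a b).1 h)]

private lemma mu_map [PartialOrder α] [PartialOrder β] [LocallyFiniteOrder α]
    [LocallyFiniteOrder β] [DecidableEq α] [DecidableEq β]
    (f : α → β) (hinj : Function.Injective f) (hle : ∀ a b : α, f a ≤ f b ↔ a ≤ b)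
    (hIcc : ∀ a b : α, (Finset.Icc a b).image f = Finset.Icc (f a) (f b)) (a b : α) :
    IncidenceAlgebra.mu ℚ (f a) (f b) = IncidenceAlgebra.mu ℚ a b :=
  mu_map_aux f hinj hle hIcc _ a b le_rfl

variable [CompleteLattice α] [Fintype α] [DecidableEq α] [LocallyFiniteOrder α]

/-- A dual Weisner-type identity. -/
private lemma weisner (x a : α) (hxa : x ≤ a) (ha : a ≠ ⊤) :
    ∑ y ∈ (Finset.Icc x ⊤).filter (fun y => y ⊓ a = x),
      IncidenceAlgebra.mu ℚ y ⊤ = 0 := by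
  have key : ∀ y ∈ Finset.Icc x ⊤,
      (if y ⊓ a = x then IncidenceAlgebra.mu ℚ y ⊤ else 0)
        = ∑ z ∈ Finset.Icc x ⊤, if z ≤ y ∧ z ≤ a then
            IncidenceAlgebra.mu ℚ y ⊤ * IncidenceAlgebra.mu ℚ x z else 0 := by
    intro y hy
    have hxy : x ≤ y := (Finset.mem_Icc.1 hy).1
    have h1 : (Finset.Icc x ⊤).filter (fun z => z ≤ y ∧ z ≤ a) = Finset.Icc x (y ⊓ a) := by
      ext z
      simp only [Finset.mem_filter, Finset.mem_Icc, le_top, and_true, le_inf_iff]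
    rw [← Finset.sum_filter, h1, ← Finset.mul_sum, sum_Icc_mu_right]
    by_cases h : y ⊓ a = x
    · rw [if_pos h, if_pos h.symm, mul_one]
    · rw [if_neg h, if_neg (fun h' => h h'.symm), mul_zero]
  rw [Finset.sum_filter, Finset.sum_congr rfl key, Finset.sum_comm]
  refine Finset.sum_eq_zero fun z hz => ?_
  have hxz : x ≤ z := (Finset.mem_Icc.1 hz).1
  by_cases hza : z ≤ a
  · have h2 : ∀ y ∈ Finset.Icc x ⊤,
        (if z ≤ y ∧ z ≤ a then IncidenceAlgebra.mu ℚ y ⊤ * IncidenceAlgebra.mu ℚ x z else 0)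
          = (if z ≤ y then IncidenceAlgebra.mu ℚ y ⊤ else 0) * IncidenceAlgebra.mu ℚ x z := by
      intro y _
      by_cases h : z ≤ y <;> simp [h, hza]
    rw [Finset.sum_congr rfl h2, ← Finset.sum_mul]
    have h3 : (Finset.Icc x ⊤).filter (fun y => z ≤ y) = Finset.Icc z ⊤ := by
      ext y
      simp only [Finset.mem_filter, Finset.mem_Icc, le_top, and_true]
      exact ⟨fun h => h.2, fun h => ⟨hxz.trans h, h⟩⟩
    rw [← Finset.sum_filter, h3, sum_Icc_mu_left,
      if_neg (fun h : z = ⊤ => ha (top_le_iff.1 (h ▸ hza)))]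
    ring
  · refine Finset.sum_eq_zero fun y _ => ?_
    rw [if_neg (fun h => hza h.2)]

/-- Hall-type vanishing: the Möbius value `μ(x, ⊤)` vanishes unless `x`
contains the radical. -/
private lemma mu_eq_zero_of_not_radical_le_aux :
    ∀ (n : ℕ) (x : α), (Finset.Icc x ⊤).card ≤ n → ¬ Order.radical α ≤ x →
      IncidenceAlgebra.mu ℚ x ⊤ = 0 := by
  intro n
  induction n with
  | zero =>
    intro x hcard _
    have : x ∈ Finset.Icc x ⊤ := Finset.mem_Icc.2 ⟨le_rfl, le_top⟩
    have := Finset.card_pos.2 ⟨x, this⟩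
    omega
  | succ n ih =>
    intro x hcard hx
    have hxt : x ≠ ⊤ := fun h => hx (h ▸ le_top)
    set a := x ⊔ Order.radical α with haa
    have ha : a ≠ ⊤ := fun h => hxt (Order.radical_nongenerating h)
    have := weisner x a le_sup_left ha
    have hmem : x ∈ (Finset.Icc x ⊤).filter (fun y => y ⊓ a = x) := by
      simp [Finset.mem_Icc, inf_eq_left.2 (le_sup_left : x ≤ a)]
      exact le_sup_left
    rw [Finset.sum_eq_single_of_mem x hmem] at this
    · exact this
    · intro y hy hne
      have hy' := Finset.mem_filter.1 hy
      have hxy : x < y := lt_of_le_of_ne (Finset.mem_Icc.1 hy'.1).1 (Ne.symm hne)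
      have hrady : ¬ Order.radical α ≤ y := by
        intro h
        have hay : a ≤ y := sup_le hxy.le h
        have : a = x := by rw [← hy'.2, inf_eq_right.2 hay]
        exact hx (this ▸ le_sup_right)
      have hss : Finset.Icc y ⊤ ⊂ Finset.Icc x ⊤ :=
        Finset.Icc_ssubset_Icc_left le_top hxy le_rfl
      have := Finset.card_lt_card hss
      exact ih y (by omega) hrady

private lemma mu_eq_zero_of_not_radical_le {x : α} (hx : ¬ Order.radical α ≤ x) :
    IncidenceAlgebra.mu ℚ x ⊤ = 0 :=
  mu_eq_zero_of_not_radical_le_aux _ x le_rfl hx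

end Generic

section Subgroup
variable {G : Type*} [Group G] [Finite G]

private lemma comap_frattini_icc (A B : Subgroup (G ⧸ frattini G))
    [Fintype (Subgroup G)] [Fintype (Subgroup (G ⧸ frattini G))]
    [LocallyFiniteOrder (Subgroup G)] [LocallyFiniteOrder (Subgroup (G ⧸ frattini G))] :
    (Finset.Icc A B).image (Subgroup.comap (QuotientGroup.mk' (frattini G)))
      = Finset.Icc (A.comap (QuotientGroup.mk' (frattini G)))
          (B.comap (QuotientGroup.mk' (frattini G))) := by
  set π := QuotientGroup.mk' (frattini G)
  have hsurj : Function.Surjective π := QuotientGroup.mk'_surjective _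
  ext V
  simp only [Finset.mem_image, Finset.mem_Icc]
  constructor
  · rintro ⟨W, hW, rfl⟩
    exact ⟨Subgroup.comap_mono hW.1, Subgroup.comap_mono hW.2⟩
  · rintro ⟨h1, h2⟩
    refine ⟨V.map π, ⟨?_, ?_⟩, ?_⟩
    · rw [← Subgroup.map_comap_eq_self_of_surjective hsurj A]
      exact Subgroup.map_mono h1
    · rw [← Subgroup.map_comap_eq_self_of_surjective hsurj B]
      exact Subgroup.map_mono h2
    · rw [Subgroup.comap_map_eq]
      refine sup_eq_left.2 ?_
      exact (Subgroup.ker_le_comap π A).trans h1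

end Subgroup


/-- m°(G,S,N) = m°(G/Φ(G), SΦ(G)/Φ(G), NΦ(G)/Φ(G)). -/
theorem mCirc_frattini_quotient (G : Type*) [Group G] [Finite G] (S N : Subgroup G)
    [N.Normal] :
    mCirc G S N =
      mCirc (G ⧸ frattini G) (S.map (QuotientGroup.mk' (frattini G)))
        (N.map (QuotientGroup.mk' (frattini G))) := by
  simp only [mCirc, subgroupMoebius]
  set π := QuotientGroup.mk' (frattini G) with hπ
  have hsurj : Function.Surjective π := QuotientGroup.mk'_surjective _
  have hker : π.ker = frattini G := QuotientGroup.ker_mk' _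
  letI : Fintype (Subgroup G) := Fintype.ofFinite _
  letI : LocallyFiniteOrder (Subgroup G) := Fintype.toLocallyFiniteOrder
  letI : Fintype (Subgroup (G ⧸ frattini G)) := Fintype.ofFinite _
  letI : LocallyFiniteOrder (Subgroup (G ⧸ frattini G)) := Fintype.toLocallyFiniteOrder
  -- Step 1: restrict the sum to subgroups containing the Frattini subgroup.
  have step1 :
      ∑ V ∈ Finset.univ.filter (fun V : Subgroup G => S ≤ V ∧ V ⊔ N = ⊤),
          IncidenceAlgebra.mu ℚ V ⊤
        = ∑ V ∈ Finset.univ.filter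
            (fun V : Subgroup G => (S ≤ V ∧ V ⊔ N = ⊤) ∧ frattini G ≤ V),
          IncidenceAlgebra.mu ℚ V ⊤ := by
    refine (Finset.sum_subset ?_ ?_).symm
    · intro V hV
      simp only [Finset.mem_filter, Finset.mem_univ, true_and] at hV ⊢
      exact hV.1
    · intro V hV hV'
      simp only [Finset.mem_filter, Finset.mem_univ, true_and] at hV hV'
      have : ¬ frattini G ≤ V := fun h => hV' ⟨hV, h⟩
      exact mu_eq_zero_of_not_radical_le this
  rw [step1]
  -- Step 2: reindex via the correspondence theorem.
  refine (Finset.sum_bij' (fun W _ => Subgroup.comap π W) (fun V _ => Subgroup.map π V)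
    ?_ ?_ ?_ ?_ ?_).symm
  · intro W hW
    simp only [Finset.mem_filter, Finset.mem_univ, true_and] at hW ⊢
    obtain ⟨hS, hN⟩ := hW
    refine ⟨⟨Subgroup.map_le_iff_le_comap.1 hS, ?_⟩, le_trans (le_of_eq hker.symm) (Subgroup.ker_le_comap π W)⟩
    have h1 : Subgroup.map π (W.comap π ⊔ N) = ⊤ := by
      rw [Subgroup.map_sup, Subgroup.map_comap_eq_self_of_surjective hsurj, hN]
    have h2 : (W.comap π ⊔ N) ⊔ π.ker = ⊤ := by
      rw [← Subgroup.comap_map_eq, h1, Subgroup.comap_top]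
    rw [hker] at h2
    exact frattini_nongenerating h2
  · intro V hV
    simp only [Finset.mem_filter, Finset.mem_univ, true_and] at hV ⊢
    obtain ⟨⟨hS, hN⟩, hΦ⟩ := hV
    exact ⟨Subgroup.map_mono hS, by
      rw [← Subgroup.map_sup, hN, Subgroup.map_top_of_surjective _ hsurj]⟩
  · intro W _
    exact Subgroup.map_comap_eq_self_of_surjective hsurj W
  · intro V hV
    simp only [Finset.mem_filter, Finset.mem_univ, true_and] at hV
    show Subgroup.comap π (Subgroup.map π V) = V
    rw [Subgroup.comap_map_eq, hker, sup_eq_left.2 hV.2]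
  · intro W _
    show IncidenceAlgebra.mu ℚ W ⊤ = IncidenceAlgebra.mu ℚ (Subgroup.comap π W) ⊤
    have hle : ∀ A B : Subgroup (G ⧸ frattini G),
        A.comap π ≤ B.comap π ↔ A ≤ B := fun A B =>
      ⟨fun h => by
        have h' := Subgroup.map_mono (f := π) h
        rwa [Subgroup.map_comap_eq_self_of_surjective hsurj,
          Subgroup.map_comap_eq_self_of_surjective hsurj] at h',
       Subgroup.comap_mono⟩
    have key := mu_map (Subgroup.comap π) (Subgroup.comap_injective hsurj) hle
      (fun A B => comap_frattini_icc A B) W ⊤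
    rw [Subgroup.comap_top] at key
    exact key.symm
end

section
/- Let p be a prime, let G be a finite p-group, let S be a subgroup of G, and let N be a normal subgroup of G. Then m°(G,S,N) = 0 if and only if S ≠ G and SN = G. -/
open scoped Classical

namespace BoucAux

open Finset IncidenceAlgebra


section GeneralMu
variable {α : Type*} [PartialOrder α] [LocallyFiniteOrder α]

lemma mu_int_cast' : ∀ (n : ℕ) (a b : α), (Icc a b).card = n →
    ((IncidenceAlgebra.mu ℤ a b : ℤ) : ℚ) = IncidenceAlgebra.mu ℚ a b := by
  intro n
  induction n using Nat.strong_induction_on with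
  | _ n ih =>
    intro a b hn
    rw [mu_apply, mu_apply]
    by_cases hab : a = b
    · simp [hab]
    · rw [if_neg hab, if_neg hab]
      push_cast
      congr 1
      refine Finset.sum_congr rfl fun x hx => ?_
      rw [Finset.mem_Ico] at hx
      refine ih _ ?_ a x rfl
      rw [← hn]
      apply Finset.card_lt_card
      constructor
      · exact Finset.Icc_subset_Icc_right hx.2.le
      · intro hsub
        have hb : b ∈ Icc a b := Finset.mem_Icc.mpr ⟨hx.1.trans hx.2.le, le_rfl⟩
        have := Finset.mem_Icc.mp (hsub hb)
        exact absurd this.2 (not_le_of_gt hx.2)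

lemma mu_int_cast (a b : α) :
    ((IncidenceAlgebra.mu ℤ a b : ℤ) : ℚ) = IncidenceAlgebra.mu ℚ a b :=
  mu_int_cast' _ a b rfl

variable [OrderTop α]

lemma mu_coatom_top {M : α} (hM : IsCoatom M) : IncidenceAlgebra.mu ℤ M (⊤ : α) = -1 := by
  rw [mu_eq_neg_sum_Ioc_of_ne hM.1]
  have h : Ioc M (⊤ : α) = {⊤} := by
    ext x
    simp only [Finset.mem_Ioc, Finset.mem_singleton]
    constructor
    · rintro ⟨h1, _⟩
      exact hM.2 x h1
    · rintro rfl
      exact ⟨lt_top_iff_ne_top.mpr hM.1, le_rfl⟩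
  rw [h, Finset.sum_singleton, mu_self]

end GeneralMu

section PGroupHoms

variable {p : ℕ} {G : Type*} [Group G] [Finite G]

local notation "A" => Multiplicative (ZMod p)

lemma card_A (hpos : 0 < p) : Nat.card A = p :=
  (Nat.card_congr Multiplicative.toAdd).trans (Nat.card_zmod p)

/-- Subgroup of A is ⊥ or ⊤ when card A = p prime. -/
lemma subgroup_A_eq (hp : p.Prime) (Z : Subgroup A) : Z = ⊥ ∨ Z = ⊤ := by
  haveI : NeZero p := ⟨hp.ne_zero⟩
  have hA : Nat.card A = p := card_A hp.pos
  have hd : Nat.card Z ∣ p := by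
    have h := Subgroup.card_subgroup_dvd_card Z
    rwa [hA] at h
  rcases (Nat.Prime.eq_one_or_self_of_dvd hp _ hd) with h | h
  · exact Or.inl (Subgroup.card_eq_one.mp h)
  · exact Or.inr (Subgroup.eq_top_of_card_eq Z (h.trans hA.symm))

/-- The kernel of a nontrivial hom to a group of prime order is a coatom. -/
lemma isCoatom_ker (hp : p.Prime) {φ : G →* A} (hφ : φ ≠ 1) : IsCoatom φ.ker := by
  obtain ⟨g₀, hg₀⟩ : ∃ g, φ g ≠ 1 := by
    by_contra h
    push_neg at h
    exact hφ (MonoidHom.ext fun g => h g)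
  constructor
  · intro h
    exact hg₀ (MonoidHom.mem_ker.mp (h ▸ Subgroup.mem_top g₀))
  · intro K hK
    obtain ⟨g, hgK, hgker⟩ := SetLike.exists_of_lt hK
    have hφg : φ g ≠ 1 := fun h => hgker (MonoidHom.mem_ker.mpr h)
    have hzp : Subgroup.zpowers (φ g) = ⊤ := by
      rcases subgroup_A_eq hp (Subgroup.zpowers (φ g)) with h | h
      · exact absurd (Subgroup.zpowers_eq_bot.mp h) hφg
      · exact h
    rw [Subgroup.eq_top_iff']
    intro x
    have hmem : φ x ∈ Subgroup.zpowers (φ g) := hzp ▸ Subgroup.mem_top _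
    obtain ⟨m, hm⟩ := hmem
    have hm' : φ g ^ m = φ x := hm
    have hker : x * (g ^ m)⁻¹ ∈ φ.ker := by
      rw [MonoidHom.mem_ker, map_mul, map_inv, map_zpow, hm', mul_inv_cancel]
    have h1 : x * (g ^ m)⁻¹ ∈ K := hK.le hker
    have h2 : g ^ m ∈ K := K.zpow_mem hgK m
    have := K.mul_mem h1 h2
    simpa using this

/-- Every coatom of a finite p-group is the kernel of a hom to `Multiplicative (ZMod p)`. -/
lemma exists_ker_eq_coatom (hp : p.Prime) (hG : IsPGroup p G) {M : Subgroup G}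
    (hM : IsCoatom M) : ∃ φ : G →* A, φ.ker = M := by
  haveI : Fact p.Prime := ⟨hp⟩
  haveI : Group.IsNilpotent G := hG.isNilpotent
  haveI hMn : M.Normal :=
    Subgroup.NormalizerCondition.normal_of_coatom M
      (normalizerCondition_of_isNilpotent (G := G)) hM
  have hQ : IsPGroup p (G ⧸ M) := hG.to_quotient M
  obtain ⟨g₁, hg₁⟩ : ∃ g : G, g ∉ M := by
    by_contra h
    push_neg at h
    exact hM.1 ((Subgroup.eq_top_iff' M).mpr h)
  haveI : Nontrivial (G ⧸ M) := by
    refine ⟨(g₁ : G ⧸ M), 1, ?_⟩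
    rw [Ne, QuotientGroup.eq_one_iff]
    exact hg₁
  have hsub : ∀ K : Subgroup (G ⧸ M), K = ⊥ ∨ K = ⊤ := by
    intro K
    have h1 : M ≤ K.comap (QuotientGroup.mk' M) := by
      intro g hg
      have hq : ((g : G) : G ⧸ M) = 1 := (QuotientGroup.eq_one_iff g).mpr hg
      simp only [Subgroup.mem_comap, QuotientGroup.mk'_apply, hq]
      exact K.one_mem
    rcases h1.lt_or_eq with h | h
    · right
      have h2 : K.comap (QuotientGroup.mk' M) = Subgroup.comap (QuotientGroup.mk' M) ⊤ := by
        rw [hM.2 _ h, Subgroup.comap_top]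
      exact Subgroup.comap_injective (QuotientGroup.mk'_surjective M) h2
    · left
      have h2 : K.comap (QuotientGroup.mk' M) = Subgroup.comap (QuotientGroup.mk' M) ⊥ := by
        rw [← h, MonoidHom.comap_bot, QuotientGroup.ker_mk']
      exact Subgroup.comap_injective (QuotientGroup.mk'_surjective M) h2
  have hcard : Nat.card (G ⧸ M) = p := by
    obtain ⟨n, hn0, hn⟩ := hQ.nontrivial_iff_card.mp inferInstance
    obtain ⟨x, hx⟩ := exists_prime_orderOf_dvd_card' (G := G ⧸ M) p
      (by rw [hn]; exact dvd_pow_self p hn0.ne')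
    have hxne : x ≠ 1 := by
      intro h
      rw [h, orderOf_one] at hx
      exact absurd hx.symm hp.one_lt.ne'
    have hzx : Subgroup.zpowers x = ⊤ := by
      rcases hsub (Subgroup.zpowers x) with h | h
      · exact absurd (Subgroup.zpowers_eq_bot.mp h) hxne
      · exact h
    rw [← hx, ← Nat.card_zpowers, hzx, Subgroup.card_top]
  let e : (G ⧸ M) ≃* A := mulEquivOfPrimeCardEq hcard (card_A hp.pos)
  refine ⟨e.toMonoidHom.comp (QuotientGroup.mk' M), ?_⟩
  ext g
  simp only [MonoidHom.mem_ker, MonoidHom.comp_apply, MulEquiv.coe_toMonoidHom,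
    QuotientGroup.mk'_apply]
  rw [MulEquiv.map_eq_one_iff, QuotientGroup.eq_one_iff]


/-- The subgroup of homomorphisms `G →* Multiplicative (ZMod p)` vanishing on `H`. -/
def vanishing (H : Subgroup G) : Subgroup (G →* A) where
  carrier := {φ | H ≤ φ.ker}
  one_mem' := fun {g} _ => by
    simp only [MonoidHom.mem_ker, MonoidHom.one_apply]
  mul_mem' := by
    intro φ ψ hφ hψ g hg
    have h1 : φ g = 1 := MonoidHom.mem_ker.mp (hφ hg)
    have h2 : ψ g = 1 := MonoidHom.mem_ker.mp (hψ hg)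
    rw [MonoidHom.mem_ker, MonoidHom.mul_apply, h1, h2, mul_one]
  inv_mem' := by
    intro φ hφ g hg
    have h1 : φ g = 1 := MonoidHom.mem_ker.mp (hφ hg)
    rw [MonoidHom.mem_ker, MonoidHom.inv_apply, h1, inv_one]

lemma mem_vanishing {H : Subgroup G} {φ : G →* A} : φ ∈ vanishing H ↔ H ≤ φ.ker := Iff.rfl

lemma isPGroup_hom (hp : p.Prime) : IsPGroup p (G →* A) := by
  intro φ
  refine ⟨1, ?_⟩
  ext g
  rw [pow_one, MonoidHom.pow_apply, MonoidHom.one_apply]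
  have : (φ g) ^ p = Multiplicative.ofAdd ((p • (φ g).toAdd : ZMod p)) := by
    rw [ofAdd_nsmul]
    simp
  rw [this, nsmul_eq_mul, ZMod.natCast_self, zero_mul]
  rfl

lemma ker_eq_top_iff {φ : G →* A} : φ.ker = ⊤ ↔ φ = 1 := by
  constructor
  · intro h
    ext g
    exact MonoidHom.mem_ker.mp (h ▸ Subgroup.mem_top g)
  · intro h
    rw [h]
    exact MonoidHom.ker_one

lemma card_fiber (hp : p.Prime) (hG : IsPGroup p G) {M : Subgroup G} (hM : IsCoatom M) :
    Nat.card {φ : G →* A // φ.ker = M} = p - 1 := by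
  haveI : Fact p.Prime := ⟨hp⟩
  haveI : NeZero p := ⟨hp.ne_zero⟩
  haveI : Finite (G →* A) := Finite.of_injective _ DFunLike.coe_injective
  obtain ⟨g₀, hg₀⟩ : ∃ g : G, g ∉ M := by
    by_contra h
    push_neg at h
    exact hM.1 ((Subgroup.eq_top_iff' M).mpr h)
  set F := vanishing (G := G) (p := p) M with hF
  let ev : F →* A :=
    { toFun := fun φ => φ.1 g₀
      map_one' := rfl
      map_mul' := fun _ _ => rfl }
  have hinj : Function.Injective ev := by
    intro φ ψ h
    have htop : M ⊔ Subgroup.zpowers g₀ = ⊤ := by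
      refine hM.2 _ (lt_of_le_of_ne le_sup_left fun hEq => hg₀ ?_)
      rw [hEq]
      exact Subgroup.mem_sup_right (Subgroup.mem_zpowers g₀)
    set χ : G →* A := φ.1 * (ψ.1)⁻¹ with hχ
    have hMk : M ≤ χ.ker := by
      intro m hm
      have h1 : φ.1 m = 1 := MonoidHom.mem_ker.mp (φ.2 hm)
      have h2 : ψ.1 m = 1 := MonoidHom.mem_ker.mp (ψ.2 hm)
      rw [MonoidHom.mem_ker, hχ, MonoidHom.mul_apply, MonoidHom.inv_apply, h1, h2, inv_one,
        mul_one]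
    have hg₀k : g₀ ∈ χ.ker := by
      rw [MonoidHom.mem_ker, hχ, MonoidHom.mul_apply, MonoidHom.inv_apply]
      exact mul_inv_eq_one.mpr h
    have hTk : (⊤ : Subgroup G) ≤ χ.ker := by
      rw [← htop]
      exact sup_le hMk (Subgroup.zpowers_le.mpr hg₀k)
    have hgall : ∀ g : G, φ.1 g = ψ.1 g := by
      intro g
      have := hTk (Subgroup.mem_top g)
      rw [MonoidHom.mem_ker, hχ, MonoidHom.mul_apply, MonoidHom.inv_apply] at this
      exact mul_inv_eq_one.mp this
    exact Subtype.ext (MonoidHom.ext hgall)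
  obtain ⟨φ₀, hφ₀⟩ := exists_ker_eq_coatom hp hG hM
  have hφ₀F : φ₀ ∈ F := le_of_eq hφ₀.symm
  have hφ₀ne : φ₀ ≠ 1 := by
    intro h
    exact hM.1 (hφ₀ ▸ (ker_eq_top_iff.mpr h))
  have hcardF : Nat.card F = p := by
    have hdvd : Nat.card F ∣ p := by
      have h := Subgroup.card_dvd_of_injective ev hinj
      rwa [card_A hp.pos] at h
    haveI : Nontrivial F := by
      refine ⟨⟨φ₀, hφ₀F⟩, 1, fun h => hφ₀ne ?_⟩
      exact congrArg Subtype.val h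
    rcases hp.eq_one_or_self_of_dvd _ hdvd with h | h
    · exact absurd h Finite.one_lt_card.ne'
    · exact h
  have hpred : ∀ φ : G →* A, φ.ker = M ↔ φ ∈ F ∧ ¬(φ = 1) := by
    intro φ
    constructor
    · intro h
      refine ⟨le_of_eq h.symm, fun h1 => hM.1 (h ▸ ker_eq_top_iff.mpr h1)⟩
    · rintro ⟨h1, h2⟩
      rcases (mem_vanishing.mp h1).lt_or_eq with h | h
      · exact absurd (ker_eq_top_iff.mp (hM.2 _ h)) h2
      · exact h.symm
  have hcount : Nat.card {φ : G →* A // φ.ker = M}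
      = Nat.card {x : F // ¬((x : G →* A) = 1)} := by
    refine Nat.card_congr ((Equiv.subtypeEquivRight hpred).trans ?_)
    exact (Equiv.subtypeSubtypeEquivSubtypeInter (· ∈ F) (¬· = 1)).symm
  rw [hcount]
  have h1 : Nat.card {x : F // ¬((x : G →* A) = 1)} = Nat.card {x : F // ¬(x = 1)} := by
    refine Nat.card_congr (Equiv.subtypeEquivRight fun x => ?_)
    rw [not_iff_not, OneMemClass.coe_eq_one]
  rw [h1]
  letI : Fintype F := Fintype.ofFinite _
  rw [Nat.card_eq_fintype_card, Fintype.card_subtype_compl, ← Nat.card_eq_fintype_card, hcardF,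
    Fintype.card_subtype_eq]


lemma card_coatoms (hp : p.Prime) (hG : IsPGroup p G) {H : Subgroup G} (hH : H ≠ ⊤) :
    ((Nat.card {M : Subgroup G // IsCoatom M ∧ H ≤ M}) : ZMod p) = 1 := by
  haveI : Fact p.Prime := ⟨hp⟩
  haveI : NeZero p := ⟨hp.ne_zero⟩
  haveI : Finite (G →* A) := Finite.of_injective _ DFunLike.coe_injective
  letI : Fintype (G →* A) := Fintype.ofFinite _
  letI : Fintype (Subgroup G) := Fintype.ofFinite _
  set coat : Finset (Subgroup G) := Finset.univ.filter (fun M => IsCoatom M ∧ H ≤ M) with hcoat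
  set Φ : Finset (G →* A) := Finset.univ.filter (fun φ => φ ≠ 1 ∧ H ≤ φ.ker) with hΦ
  have hmaps : ∀ φ ∈ Φ, φ.ker ∈ coat := by
    intro φ hφ
    rw [hΦ, Finset.mem_filter] at hφ
    rw [hcoat, Finset.mem_filter]
    exact ⟨Finset.mem_univ _, isCoatom_ker hp hφ.2.1, hφ.2.2⟩
  have hcount : Φ.card = ∑ M ∈ coat, (Φ.filter fun φ => φ.ker = M).card :=
    Finset.card_eq_sum_card_fiberwise hmaps
  have hfib : ∀ M ∈ coat, (Φ.filter fun φ => φ.ker = M).card = p - 1 := by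
    intro M hM
    rw [hcoat, Finset.mem_filter] at hM
    obtain ⟨-, hMco, hHM⟩ := hM
    have h1 : Φ.filter (fun φ => φ.ker = M) = Finset.univ.filter (fun φ => φ.ker = M) := by
      ext φ
      simp only [hΦ, Finset.mem_filter, Finset.mem_univ, true_and, and_iff_right_iff_imp]
      intro h
      exact ⟨fun h1 => hMco.1 (h ▸ ker_eq_top_iff.mpr h1), h ▸ hHM⟩
    rw [h1]
    have h2 := card_fiber hp hG hMco
    rwa [Nat.card_eq_fintype_card, Fintype.card_subtype] at h2
  have hΦconst : Φ.card = coat.card * (p - 1) := by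
    rw [hcount, Finset.sum_congr rfl hfib, Finset.sum_const, smul_eq_mul]
  -- the other count : |Φ| = card E - 1
  set E := vanishing (G := G) (p := p) H with hEdef
  have hE : Φ = (Finset.univ.filter (fun φ : G →* A => φ ∈ E)).erase 1 := by
    ext φ
    rw [hΦ, Finset.mem_filter, Finset.mem_erase, Finset.mem_filter]
    constructor
    · rintro ⟨h1, h2, h3⟩
      exact ⟨h2, h1, h3⟩
    · rintro ⟨h1, h2, h3⟩
      exact ⟨h2, h1, h3⟩
  have hcardE : (Finset.univ.filter (fun φ : G →* A => φ ∈ E)).card = Nat.card E := by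
    rw [Nat.card_eq_fintype_card, Fintype.card_subtype]
  have h1E : (1 : G →* A) ∈ Finset.univ.filter (fun φ : G →* A => φ ∈ E) := by
    rw [Finset.mem_filter]
    exact ⟨Finset.mem_univ _, E.one_mem⟩
  have hΦcard : Φ.card = Nat.card E - 1 := by
    rw [hE, Finset.card_erase_of_mem h1E, hcardE]
  -- E is a p-group of order > 1
  obtain ⟨n, hn⟩ := IsPGroup.iff_card.mp ((isPGroup_hom (G := G) hp).to_subgroup E)
  obtain ⟨M₀, hM₀, hHM₀⟩ := (eq_top_or_exists_le_coatom H).resolve_left hH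
  obtain ⟨φ₀, hφ₀⟩ := exists_ker_eq_coatom hp hG hM₀
  haveI : Nontrivial E := by
    refine ⟨⟨φ₀, ?_⟩, 1, fun h => ?_⟩
    · exact mem_vanishing.mpr (hφ₀ ▸ hHM₀)
    · have hne : φ₀ ≠ 1 := fun h1 => hM₀.1 (hφ₀ ▸ ker_eq_top_iff.mpr h1)
      exact hne (congrArg Subtype.val h)
  have hn0 : n ≠ 0 := by
    intro h
    rw [h, pow_zero] at hn
    exact Finite.one_lt_card.ne' hn
  -- put it together in ZMod p
  have hkey : (coat.card * (p - 1) : ℕ) = (p ^ n - 1 : ℕ) := by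
    rw [← hΦconst, hΦcard, hn]
  have hcast : ((coat.card : ZMod p)) * ((p : ZMod p) - 1) = (p : ZMod p) ^ n - 1 := by
    have := congrArg (fun m : ℕ => (m : ZMod p)) hkey
    simpa [Nat.cast_sub hp.one_le, Nat.cast_sub (Nat.one_le_pow n p hp.pos)] using this
  rw [ZMod.natCast_self, zero_pow hn0] at hcast
  have hc : (coat.card : ZMod p) = 1 := by
    have h1 : -(coat.card : ZMod p) = -1 := by
      calc -(coat.card : ZMod p) = (coat.card : ZMod p) * (0 - 1) := by ring
      _ = 0 - 1 := hcast
      _ = -1 := by ring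
    exact neg_inj.mp h1
  have hfinal : Nat.card {M : Subgroup G // IsCoatom M ∧ H ≤ M} = coat.card := by
    rw [Nat.card_eq_fintype_card, Fintype.card_subtype]
  rw [hfinal, hc]

end PGroupHoms

section MuModP

variable {p : ℕ} {G : Type*} [Group G] [Finite G]

lemma mu_dvd_aux (hp : p.Prime) (hG : IsPGroup p G) :
    letI : Fintype (Subgroup G) := Fintype.ofFinite _
    letI : LocallyFiniteOrder (Subgroup G) := Fintype.toLocallyFiniteOrder
    ∀ (n : ℕ) (V : Subgroup G), (Icc V (⊤ : Subgroup G)).card = n → V ≠ ⊤ → ¬IsCoatom V →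
      ((IncidenceAlgebra.mu ℤ V (⊤ : Subgroup G) : ℤ) : ZMod p) = 0 := by
  letI : Fintype (Subgroup G) := Fintype.ofFinite _
  letI : LocallyFiniteOrder (Subgroup G) := Fintype.toLocallyFiniteOrder
  intro n
  induction n using Nat.strong_induction_on with
  | _ n ih =>
    intro V hn hV hVco
    rw [IncidenceAlgebra.mu_eq_neg_sum_Ioc_of_ne hV]
    push_cast
    rw [neg_eq_zero]
    have htopmem : (⊤ : Subgroup G) ∈ Ioc V (⊤ : Subgroup G) :=
      Finset.mem_Ioc.mpr ⟨lt_top_iff_ne_top.mpr hV, le_rfl⟩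
    rw [← Finset.sum_erase_add _ _ htopmem, IncidenceAlgebra.mu_self]
    push_cast
    set s := (Ioc V (⊤ : Subgroup G)).erase ⊤ with hs
    rw [← Finset.sum_filter_add_sum_filter_not s (fun W => IsCoatom W)]
    have hco : ∀ W ∈ s.filter (fun W => IsCoatom W),
        ((IncidenceAlgebra.mu ℤ W (⊤ : Subgroup G) : ℤ) : ZMod p) = -1 := by
      intro W hW
      rw [Finset.mem_filter] at hW
      rw [mu_coatom_top hW.2]
      push_cast
      ring
    have hnc : ∀ W ∈ s.filter (fun W => ¬IsCoatom W),
        ((IncidenceAlgebra.mu ℤ W (⊤ : Subgroup G) : ℤ) : ZMod p) = 0 := by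
      intro W hW
      rw [Finset.mem_filter, Finset.mem_erase, Finset.mem_Ioc] at hW
      obtain ⟨⟨hWtop, hVW, -⟩, hWco⟩ := hW
      refine ih _ ?_ W rfl hWtop hWco
      rw [← hn]
      apply Finset.card_lt_card
      constructor
      · exact Finset.Icc_subset_Icc_left hVW.le
      · intro hsub
        have hmem : V ∈ Icc V (⊤ : Subgroup G) := Finset.mem_Icc.mpr ⟨le_rfl, le_top⟩
        have := Finset.mem_Icc.mp (hsub hmem)
        exact absurd this.1 (not_le_of_gt hVW)
    rw [Finset.sum_congr rfl hco, Finset.sum_congr rfl hnc, Finset.sum_const, Finset.sum_const,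
      smul_zero, nsmul_eq_mul]
    have hcard : (s.filter (fun W => IsCoatom W)).card
        = Nat.card {M : Subgroup G // IsCoatom M ∧ V ≤ M} := by
      rw [Nat.card_eq_fintype_card, Fintype.card_subtype]
      congr 1
      ext W
      rw [hs, Finset.mem_filter, Finset.mem_erase, Finset.mem_Ioc, Finset.mem_filter]
      constructor
      · rintro ⟨⟨-, hVW, -⟩, hWco⟩
        exact ⟨Finset.mem_univ _, hWco, hVW.le⟩
      · rintro ⟨-, hWco, hVW⟩
        refine ⟨⟨hWco.1, lt_of_le_of_ne hVW ?_, le_top⟩, hWco⟩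
        intro h
        exact hVco (h ▸ hWco)
    rw [hcard, card_coatoms hp hG hV]
    ring

end MuModP

end BoucAux

/-- For a finite p-group G, a subgroup S and a normal subgroup N,
m°(G,S,N) = 0 if and only if S ≠ G and SN = G. -/
theorem mCirc_eq_zero_iff (p : ℕ) (hp : p.Prime) (G : Type*) [Group G] [Finite G]
    (hG : IsPGroup p G) (S N : Subgroup G) [N.Normal] :
    mCirc G S N = 0 ↔ S ≠ ⊤ ∧ S ⊔ N = ⊤ := by
  letI : Fintype (Subgroup G) := Fintype.ofFinite _
  letI : LocallyFiniteOrder (Subgroup G) := Fintype.toLocallyFiniteOrder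
  haveI : Fact p.Prime := ⟨hp⟩
  set F : Finset (Subgroup G) :=
    Finset.univ.filter (fun V : Subgroup G => S ≤ V ∧ V ⊔ N = ⊤) with hF
  have hmc : mCirc G S N
      = ((∑ V ∈ F, IncidenceAlgebra.mu ℤ V (⊤ : Subgroup G) : ℤ) : ℚ) := by
    simp only [mCirc, subgroupMoebius, hF]
    push_cast
    exact Finset.sum_congr rfl fun V _ => (BoucAux.mu_int_cast V ⊤).symm
  by_cases hS : S = ⊤
  · -- S = ⊤ : mCirc = 1 ≠ 0 and RHS is false
    have hF1 : F = {⊤} := by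
      ext V
      simp only [hF, Finset.mem_filter, Finset.mem_univ, true_and, Finset.mem_singleton]
      constructor
      · rintro ⟨h1, -⟩
        exact top_le_iff.mp (hS ▸ h1)
      · rintro rfl
        exact ⟨le_top, top_sup_eq N⟩
    rw [hmc, hF1, Finset.sum_singleton, IncidenceAlgebra.mu_self]
    norm_num
    intro h
    exact absurd hS h
  by_cases hSN : S ⊔ N = ⊤
  · -- S ≠ ⊤, S ⊔ N = ⊤ : mCirc = 0 and RHS is true
    have hFIcc : F = Finset.Icc S (⊤ : Subgroup G) := by
      ext V
      simp only [hF, Finset.mem_filter, Finset.mem_univ, true_and, Finset.mem_Icc]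
      constructor
      · rintro ⟨h1, -⟩
        exact ⟨h1, le_top⟩
      · rintro ⟨h1, -⟩
        refine ⟨h1, ?_⟩
        rw [eq_top_iff, ← hSN]
        exact sup_le_sup_right h1 N
    rw [hmc, hFIcc, IncidenceAlgebra.sum_Icc_mu_left, if_neg hS]
    norm_num
    exact ⟨hS, hSN⟩
  · -- S ⊔ N ≠ ⊤ : mCirc ≡ 1 mod p, so mCirc ≠ 0; RHS is false
    haveI : Fact (1 < p) := ⟨hp.one_lt⟩
    have hcnt : ∀ (H : Subgroup G), H ≠ ⊤ →
        (((Finset.univ.filter (fun M : Subgroup G => IsCoatom M ∧ H ≤ M)).card : ℕ)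
          : ZMod p) = 1 := by
      intro H hH
      have h := BoucAux.card_coatoms hp hG hH
      rwa [Nat.card_eq_fintype_card, Fintype.card_subtype] at h
    have hSne : S ≠ ⊤ := hS
    have hmodp : ((∑ V ∈ F, IncidenceAlgebra.mu ℤ V (⊤ : Subgroup G) : ℤ) : ZMod p) = 1 := by
      push_cast
      have htopF : (⊤ : Subgroup G) ∈ F := by
        simp only [hF, Finset.mem_filter, Finset.mem_univ, true_and]
        exact ⟨le_top, top_sup_eq N⟩
      rw [← Finset.sum_erase_add _ _ htopF, IncidenceAlgebra.mu_self]
      set s := F.erase (⊤ : Subgroup G) with hs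
      rw [← Finset.sum_filter_add_sum_filter_not s (fun W => IsCoatom W)]
      have hnc : ∀ W ∈ s.filter (fun W => ¬IsCoatom W),
          ((IncidenceAlgebra.mu ℤ W (⊤ : Subgroup G) : ℤ) : ZMod p) = 0 := by
        intro W hW
        rw [Finset.mem_filter, hs, Finset.mem_erase] at hW
        exact BoucAux.mu_dvd_aux hp hG _ W rfl hW.1.1 hW.2
      have hco : ∀ W ∈ s.filter (fun W => IsCoatom W),
          ((IncidenceAlgebra.mu ℤ W (⊤ : Subgroup G) : ℤ) : ZMod p) = -1 := by
        intro W hW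
        rw [Finset.mem_filter] at hW
        rw [BoucAux.mu_coatom_top hW.2]
        push_cast
        ring
      rw [Finset.sum_congr rfl hco, Finset.sum_congr rfl hnc, Finset.sum_const,
        Finset.sum_const, smul_zero, nsmul_eq_mul]
      -- now count the coatoms in F
      set A₁ : Finset (Subgroup G) :=
        Finset.univ.filter (fun M : Subgroup G => IsCoatom M ∧ S ≤ M) with hA₁
      have hid : s.filter (fun W => IsCoatom W)
          = A₁.filter (fun M => ¬ S ⊔ N ≤ M) := by
        ext M
        rw [Finset.mem_filter, hs, Finset.mem_erase, hF, Finset.mem_filter, Finset.mem_filter,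
          hA₁, Finset.mem_filter]
        constructor
        · rintro ⟨⟨hMtop, -, hSM, hMN⟩, hMco⟩
          refine ⟨⟨Finset.mem_univ _, hMco, hSM⟩, fun h => hMtop ?_⟩
          have hNM : N ≤ M := le_trans le_sup_right h
          rw [← hMN, sup_eq_left.mpr hNM]
        · rintro ⟨⟨-, hMco, hSM⟩, h⟩
          have hNM : ¬ N ≤ M := fun hN => h (sup_le hSM hN)
          have hMN : M ⊔ N = ⊤ := by
            refine hMco.2 _ (lt_of_le_of_ne le_sup_left fun hEq => hNM ?_)
            exact sup_eq_left.mp hEq.symm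
          exact ⟨⟨hMco.1, Finset.mem_univ _, hSM, hMN⟩, hMco⟩
      have hid2 : A₁.filter (fun M => S ⊔ N ≤ M)
          = Finset.univ.filter (fun M : Subgroup G => IsCoatom M ∧ S ⊔ N ≤ M) := by
        ext M
        rw [Finset.mem_filter, hA₁, Finset.mem_filter, Finset.mem_filter]
        constructor
        · rintro ⟨⟨-, hMco, -⟩, h⟩
          exact ⟨Finset.mem_univ _, hMco, h⟩
        · rintro ⟨-, hMco, h⟩
          exact ⟨⟨Finset.mem_univ _, hMco, le_trans le_sup_left h⟩, h⟩
      have hsplit : (A₁.filter (fun M => S ⊔ N ≤ M)).card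
          + (A₁.filter (fun M => ¬ S ⊔ N ≤ M)).card = A₁.card :=
        Finset.card_filter_add_card_filter_not _
      have hcast : ((A₁.filter (fun M => S ⊔ N ≤ M)).card : ZMod p)
          + ((A₁.filter (fun M => ¬ S ⊔ N ≤ M)).card : ZMod p) = (A₁.card : ZMod p) := by
        push_cast [← hsplit]
        ring
      rw [hid2, hcnt _ hSN] at hcast
      rw [hA₁] at hcast
      rw [hcnt _ hSne] at hcast
      have hzero : (((s.filter (fun W => IsCoatom W)).card : ℕ) : ZMod p) = 0 := by
        rw [hid, hA₁]
        exact add_eq_left.mp hcast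
      rw [hzero]
      push_cast
      ring
    constructor
    · intro h
      rw [hmc, Int.cast_eq_zero] at h
      rw [h] at hmodp
      simp only [Int.cast_zero] at hmodp
      exact absurd hmodp.symm one_ne_zero
    · rintro ⟨-, h2⟩
      exact absurd h2 hSN
end

section
/- Let G be a finite group and let N be a normal subgroup of G. Then m(G,N) = m(G/Φ(G), NΦ(G)/Φ(G)), where Φ(G) is the Frattini subgroup of G and the right-hand side is computed in the quotient group G/Φ(G) with its Möbius function. -/
set_option maxHeartbeats 1000000

open scoped Classical

set_option linter.unusedSectionVars false
namespace MFrattini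
open Finset Subgroup IncidenceAlgebra

variable {G : Type*} [Group G] [Finite G]

/-- The intersection of the maximal subgroups containing `X`. -/
noncomputable def cl (X : Subgroup G) : Subgroup G :=
  ⨅ M ∈ {M : Subgroup G | IsCoatom M ∧ X ≤ M}, M

lemma le_cl (X : Subgroup G) : X ≤ cl X := le_iInf₂ fun _ hM => hM.2

lemma cl_mono {X Y : Subgroup G} (h : X ≤ Y) : cl X ≤ cl Y :=
  le_iInf₂ fun M hM => iInf₂_le M ⟨hM.1, h.trans hM.2⟩

lemma frattini_le_cl (X : Subgroup G) : frattini G ≤ cl X :=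
  le_iInf₂ fun _ hM => frattini_le_coatom hM.1

lemma cl_ne_top {X : Subgroup G} (h : X ≠ ⊤) : cl X ≠ ⊤ := by
  obtain hT | ⟨M, hM, hXM⟩ := eq_top_or_exists_le_coatom X
  · exact absurd hT h
  · intro hc
    exact hM.1 (top_le_iff.mp (hc ▸ iInf₂_le M ⟨hM, hXM⟩))

lemma mu_vanish : ∀ X : Subgroup G, X ≠ cl X → subgroupMoebius G X ⊤ = 0 := by
  letI : Fintype (Subgroup G) := Fintype.ofFinite _
  letI : LocallyFiniteOrder (Subgroup G) := Fintype.toLocallyFiniteOrder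
  have wf : WellFounded ((· > ·) : Subgroup G → Subgroup G → Prop) := wellFounded_gt
  intro X
  induction X using wf.induction with
  | _ X IH =>
    intro h
    have hXtop : X ≠ ⊤ := by
      rintro rfl
      exact h (top_le_iff.mp (le_cl ⊤)).symm
    have hmu : ∀ A : Subgroup G, subgroupMoebius G A ⊤ = mu ℚ A ⊤ := fun A => rfl
    have hsub : Icc (cl X) ⊤ ⊆ Icc X ⊤ := Icc_subset_Icc_left (le_cl X)
    have S1 : ∑ x ∈ Icc X ⊤, mu ℚ x ⊤ = 0 := by
      rw [sum_Icc_mu_left, if_neg hXtop]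
    have S2 : ∑ x ∈ Icc (cl X) ⊤, mu ℚ x ⊤ = 0 := by
      rw [sum_Icc_mu_left, if_neg (cl_ne_top hXtop)]
    have hD : ∑ x ∈ Icc X ⊤ \ Icc (cl X) ⊤, mu ℚ x ⊤ = 0 := by
      rw [sum_sdiff_eq_sub hsub, S1, S2, sub_zero]
    have hXD : X ∈ Icc X ⊤ \ Icc (cl X) ⊤ := by
      simp only [mem_sdiff, mem_Icc, le_top, and_true, le_refl, true_and]
      intro hcl
      exact h (le_antisymm (le_cl X) hcl)
    rw [hmu, ← hD]
    symm
    apply Finset.sum_eq_single_of_mem X hXD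
    intro y hy hne
    have hXy : X < y := lt_of_le_of_ne (mem_Icc.mp (mem_sdiff.mp hy).1).1 (Ne.symm hne)
    have hycl : y ≠ cl y := by
      intro he
      have hc : cl X ≤ y := he ▸ cl_mono hXy.le
      exact absurd (mem_Icc.mpr ⟨hc, le_top⟩) (mem_sdiff.mp hy).2
    rw [← hmu]
    exact IH y hXy hycl

lemma mu_vanish' {X : Subgroup G} (h : ¬ frattini G ≤ X) : subgroupMoebius G X ⊤ = 0 := by
  apply mu_vanish
  intro he
  exact h (he ▸ frattini_le_cl X)

section Transfer

variable {Q : Type*} [Group Q] [Finite Q] (π : G →* Q) (hsur : Function.Surjective π)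

include hsur

lemma map_ne_top {X : Subgroup G} (hker : π.ker ≤ X) (hX : X ≠ ⊤) : X.map π ≠ ⊤ := by
  intro h
  apply hX
  have := congrArg (Subgroup.comap π) h
  rwa [comap_map_eq_self hker, comap_top] at this

lemma mu_transfer : ∀ X : Subgroup G, π.ker ≤ X →
    subgroupMoebius G X ⊤ = subgroupMoebius Q (X.map π) ⊤ := by
  letI : Fintype (Subgroup G) := Fintype.ofFinite _
  letI : LocallyFiniteOrder (Subgroup G) := Fintype.toLocallyFiniteOrder
  letI : Fintype (Subgroup Q) := Fintype.ofFinite _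
  letI : LocallyFiniteOrder (Subgroup Q) := Fintype.toLocallyFiniteOrder
  have hmuG : ∀ A : Subgroup G, subgroupMoebius G A ⊤ = mu ℚ A ⊤ := fun A => rfl
  have hmuQ : ∀ A : Subgroup Q, subgroupMoebius Q A ⊤ = mu ℚ A ⊤ := fun A => rfl
  have wf : WellFounded ((· > ·) : Subgroup G → Subgroup G → Prop) := wellFounded_gt
  intro X
  induction X using wf.induction with
  | _ X IH =>
    intro hker
    rcases eq_or_ne X ⊤ with rfl | hX
    · rw [map_top_of_surjective π hsur, hmuG, hmuQ, mu_self, mu_self]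
    · have hmX : X.map π ≠ ⊤ := map_ne_top π hsur hker hX
      rw [hmuG, hmuQ, mu_eq_neg_sum_Ioc_of_ne hX, mu_eq_neg_sum_Ioc_of_ne hmX]
      congr 1
      refine Finset.sum_nbij' (fun Y => Y.map π) (fun Y' => Y'.comap π) ?_ ?_ ?_ ?_ ?_
      · intro Y hY
        obtain ⟨h1, -⟩ := mem_Ioc.mp hY
        refine mem_Ioc.mpr ⟨lt_of_le_of_ne (map_mono h1.le) ?_, le_top⟩
        intro he
        have := congrArg (Subgroup.comap π) he
        rw [comap_map_eq_self hker, comap_map_eq_self (hker.trans h1.le)] at this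
        exact h1.ne this
      · intro Y' hY'
        obtain ⟨h1, -⟩ := mem_Ioc.mp hY'
        refine mem_Ioc.mpr ⟨?_, le_top⟩
        have hle : X ≤ Y'.comap π := by
          rw [← comap_map_eq_self hker]
          exact comap_mono h1.le
        refine lt_of_le_of_ne hle ?_
        intro he
        have := congrArg (Subgroup.map π) he
        rw [map_comap_eq_self_of_surjective hsur] at this
        exact h1.ne this
      · intro Y hY
        exact comap_map_eq_self (hker.trans (mem_Ioc.mp hY).1.le)
      · intro Y' _
        exact map_comap_eq_self_of_surjective hsur _
      · intro Y hY
        have := IH Y (mem_Ioc.mp hY).1 (hker.trans (mem_Ioc.mp hY).1.le)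
        rw [hmuG, hmuQ] at this
        exact this

end Transfer
end MFrattini

open MFrattini Subgroup

/-- m(G,N) = m(G/Φ(G), NΦ(G)/Φ(G)). -/
theorem mBouc_frattini_quotient (G : Type*) [Group G] [Finite G] (N : Subgroup G)
    [N.Normal] :
    mBouc G N =
      mBouc (G ⧸ frattini G) (N.map (QuotientGroup.mk' (frattini G))) := by
  letI : Fintype (Subgroup G) := Fintype.ofFinite _
  letI : Fintype (Subgroup (G ⧸ frattini G)) := Fintype.ofFinite _
  set π := QuotientGroup.mk' (frattini G) with hπ
  have hsur : Function.Surjective π := QuotientGroup.mk'_surjective _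
  have hker : π.ker = frattini G := QuotientGroup.ker_mk' _
  show (1 / (Nat.card G : ℚ)) *
      ∑ X ∈ Finset.univ.filter (fun X : Subgroup G => X ⊔ N = ⊤),
        (Nat.card X : ℚ) * subgroupMoebius G X ⊤ =
    (1 / (Nat.card (G ⧸ frattini G) : ℚ)) *
      ∑ X ∈ Finset.univ.filter
          (fun X : Subgroup (G ⧸ frattini G) => X ⊔ N.map π = ⊤),
        (Nat.card X : ℚ) * subgroupMoebius (G ⧸ frattini G) X ⊤
  rw [Finset.mul_sum, Finset.mul_sum]
  -- restrict the left sum to subgroups containing the Frattini subgroup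
  rw [← Finset.sum_subset
      (s₁ := Finset.univ.filter
        (fun X : Subgroup G => (X ⊔ N = ⊤) ∧ frattini G ≤ X))
      (by intro X hX; simp only [Finset.mem_filter] at *; exact ⟨hX.1, hX.2.1⟩)
      (by
        intro X hX hX'
        simp only [Finset.mem_filter, Finset.mem_univ, true_and] at hX hX'
        have : ¬ frattini G ≤ X := fun h => hX' ⟨hX, h⟩
        rw [mu_vanish' this, mul_zero, mul_zero])]
  -- now transport the sum through the quotient map
  refine Finset.sum_nbij' (fun X => X.map π) (fun X' => X'.comap π) ?_ ?_ ?_ ?_ ?_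
  · intro X hX
    simp only [Finset.mem_filter, Finset.mem_univ, true_and] at hX ⊢
    rw [← Subgroup.map_sup, hX.1, map_top_of_surjective π hsur]
  · intro X' hX'
    simp only [Finset.mem_filter, Finset.mem_univ, true_and] at hX' ⊢
    constructor
    · have hmap : Subgroup.map π (X'.comap π ⊔ N) = ⊤ := by
        rw [Subgroup.map_sup, map_comap_eq_self_of_surjective hsur, hX']
      have hk : π.ker ≤ X'.comap π ⊔ N := le_sup_of_le_left (ker_le_comap π X')
      have := congrArg (Subgroup.comap π) hmap
      rwa [comap_map_eq_self hk, comap_top] at this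
    · exact hker.ge.trans (ker_le_comap π X')
  · intro X hX
    simp only [Finset.mem_filter, Finset.mem_univ, true_and] at hX
    exact comap_map_eq_self (hker.le.trans hX.2)
  · intro X' _
    exact map_comap_eq_self_of_surjective hsur _
  · intro X hX
    simp only [Finset.mem_filter, Finset.mem_univ, true_and] at hX
    have hΦX : frattini G ≤ X := hX.2
    have hkX : π.ker ≤ X := hker.le.trans hΦX
    have hmu := mu_transfer π hsur X hkX
    have hcard : (1 / (Nat.card G : ℚ)) * (Nat.card X : ℚ)
        = (1 / (Nat.card (G ⧸ frattini G) : ℚ)) * (Nat.card (X.map π) : ℚ) := by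
      have h1 : (Nat.card X : ℚ) * X.index = (Nat.card G : ℚ) := by
        exact_mod_cast congrArg (Nat.cast (R := ℚ)) (Subgroup.card_mul_index (H := X))
      have h3 : (X.map π).index = X.index := X.index_map_eq hsur hkX
      have h2 : (Nat.card (X.map π) : ℚ) * X.index
          = (Nat.card (G ⧸ frattini G) : ℚ) := by
        rw [← h3]
        exact_mod_cast congrArg (Nat.cast (R := ℚ))
          (Subgroup.card_mul_index (H := X.map π))
      have hx0 : (Nat.card X : ℚ) ≠ 0 := Nat.cast_ne_zero.mpr Nat.card_pos.ne'
      have hm0 : (Nat.card (X.map π) : ℚ) ≠ 0 := Nat.cast_ne_zero.mpr Nat.card_pos.ne'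
      have hi0 : (X.index : ℚ) ≠ 0 :=
        Nat.cast_ne_zero.mpr Subgroup.index_ne_zero_of_finite
      have key : ∀ a i : ℚ, a ≠ 0 → (a * i)⁻¹ * a = i⁻¹ := fun a i ha => by
        rw [mul_inv, mul_comm a⁻¹ i⁻¹, mul_assoc, inv_mul_cancel₀ ha, mul_one]
      rw [one_div, one_div, ← h1, ← h2, key _ _ hx0, key _ _ hm0]
    rw [hmu, ← mul_assoc, ← mul_assoc, hcard]
end

section
/- Let p be a prime, let G be an elementary abelian p-group of rank n with n > 2, and let N be a subgroup of G of rank k with 1 ≤ k ≤ n − 2. Then m(G,N) = ∏_{i=1}^{k} (1 − p^{n−1−i}). -/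
open scoped Classical

open Finset IncidenceAlgebra


section Generic
variable {α : Type*} {β : Type*}

section Char
variable [PartialOrder α] [LocallyFiniteOrder α] [PartialOrder β] [LocallyFiniteOrder β]

lemma mu_unique {a b : α} (f : α → ℚ)
    (hf : ∀ x, a ≤ x → x ≤ b → ∑ z ∈ Icc x b, f z = if x = b then 1 else 0) :
    ∀ x, a ≤ x → x ≤ b → f x = mu ℚ x b := by
  suffices h : ∀ (m : ℕ) (x), a ≤ x → x ≤ b → (Icc x b).card ≤ m → f x = mu ℚ x b by
    intro x hax hxb; exact h (Icc x b).card x hax hxb le_rfl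
  intro m
  induction m with
  | zero =>
    intro x hax hxb h0
    exact absurd (card_pos.2 ⟨x, mem_Icc.2 ⟨le_rfl, hxb⟩⟩) (by omega)
  | succ m ih =>
    intro x hax hxb hc
    have hx : x ∈ Icc x b := mem_Icc.2 ⟨le_rfl, hxb⟩
    have hsum := hf x hax hxb
    have hmu := sum_Icc_mu_left (𝕜 := ℚ) x b
    rw [← Finset.add_sum_erase _ _ hx] at hsum hmu
    have herase : ∀ z ∈ (Icc x b).erase x, f z = mu ℚ z b := by
      intro z hz
      obtain ⟨hne, hzmem⟩ := Finset.mem_erase.1 hz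
      obtain ⟨hxz, hzb⟩ := mem_Icc.1 hzmem
      refine ih z (le_trans hax hxz) hzb ?_
      have hss : Icc z b ⊂ Icc x b := by
        refine ⟨Icc_subset_Icc_left hxz, fun hsub => ?_⟩
        have := mem_Icc.1 (hsub hx)
        exact hne (le_antisymm this.1 hxz)
      have := Finset.card_lt_card hss
      omega
    have : ∑ z ∈ (Icc x b).erase x, f z = ∑ z ∈ (Icc x b).erase x, mu ℚ z b :=
      Finset.sum_congr rfl herase
    linarith [hsum, hmu]

lemma mu_orderIso_subtype {P : α → Prop}
    (hP : ∀ ⦃x y z : α⦄, P x → P z → x ≤ y → y ≤ z → P y)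
    (e : β ≃o {x : α // P x}) (c d : β) :
    mu ℚ (↑(e c) : α) (↑(e d) : α) = mu ℚ c d := by
  by_cases hcd : c ≤ d
  · have hcd' : ((e c : {x : α // P x}) : α) ≤ ↑(e d) := e.monotone hcd
    have key := mu_unique (a := ((e c : {x : α // P x}) : α)) (b := ((e d : {x : α // P x}) : α))
      (f := fun x => if h : P x then mu ℚ (e.symm ⟨x, h⟩) d else 0) ?_ ↑(e c) le_rfl hcd'
    · rw [← key]
      simp only [dif_pos (e c).2]
      exact congrArg (fun t => mu ℚ t d)
        ((congrArg e.symm (Subtype.ext rfl)).trans (e.symm_apply_apply c))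
    · intro x hax hxb
      have hPx : P x := hP (e c).2 (e d).2 hax hxb
      have hre : ∑ z ∈ Icc x ↑(e d), (fun x => if h : P x then mu ℚ (e.symm ⟨x, h⟩) d else 0) z
          = ∑ w ∈ Icc (e.symm ⟨x, hPx⟩) d, mu ℚ w d := by
        refine Finset.sum_nbij' (fun z => if h : P z then e.symm ⟨z, h⟩ else c)
          (fun w => ((e w : {x : α // P x}) : α)) ?_ ?_ ?_ ?_ ?_
        · intro z hz
          obtain ⟨hxz, hzd⟩ := mem_Icc.1 hz
          have hPz : P z := hP hPx (e d).2 hxz hzd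
          simp only [dif_pos hPz, mem_Icc]
          constructor
          · exact e.symm.monotone (show (⟨x, hPx⟩ : {x : α // P x}) ≤ ⟨z, hPz⟩ from hxz)
          · have : e.symm ⟨z, hPz⟩ ≤ e.symm (e d) := e.symm.monotone hzd
            rwa [e.symm_apply_apply] at this
        · intro w hw
          obtain ⟨hxw, hwd⟩ := mem_Icc.1 hw
          rw [mem_Icc]
          refine ⟨?_, e.monotone hwd⟩
          have := e.monotone hxw
          rw [e.apply_symm_apply] at this
          exact this
        · intro z hz
          obtain ⟨hxz, hzd⟩ := mem_Icc.1 hz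
          have hPz : P z := hP hPx (e d).2 hxz hzd
          simp only [dif_pos hPz, e.apply_symm_apply]
        · intro w hw
          simp only [dif_pos (e w).2]
          exact (congrArg e.symm (Subtype.ext rfl)).trans (e.symm_apply_apply w)
        · intro z hz
          obtain ⟨hxz, hzd⟩ := mem_Icc.1 hz
          have hPz : P z := hP hPx (e d).2 hxz hzd
          simp only [dif_pos hPz]
      rw [hre, sum_Icc_mu_left]
      have hiff : e.symm ⟨x, hPx⟩ = d ↔ x = ↑(e d) := by
        rw [OrderIso.symm_apply_eq]
        exact ⟨fun h => congrArg Subtype.val h, fun h => Subtype.ext h⟩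
      simp only [hiff]
  · have h2 : ¬ (((e c : {x : α // P x}) : α) ≤ ↑(e d)) := fun h =>
      hcd (e.le_iff_le.1 (Subtype.coe_le_coe.1 h))
    rw [apply_eq_zero_of_not_le h2, apply_eq_zero_of_not_le hcd]

/-- plain order iso version -/
lemma mu_orderIso (e : β ≃o α) (c d : β) : mu ℚ (e c) (e d) = mu ℚ c d := by
  let e' : β ≃o {x : α // (fun _ => True) x} :=
    e.trans ⟨⟨fun a => ⟨a, trivial⟩, fun a => a.1, fun _ => rfl, fun _ => rfl⟩, Iff.rfl⟩
  have := mu_orderIso_subtype (P := fun _ => True)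
    (fun _ _ _ _ _ _ _ => trivial) e' c d
  exact this

end Char

section Weisner
variable [Lattice α] [BoundedOrder α] [Fintype α] [LocallyFiniteOrder α]

lemma weisner_bot {a : α} (ha : ⊥ < a) :
    ∑ x ∈ univ.filter (fun x => x ⊔ a = ⊤), mu ℚ ⊥ x = 0 := by
  have step1 : ∑ x ∈ univ.filter (fun x => x ⊔ a = ⊤), mu ℚ ⊥ x
      = ∑ x ∈ univ, ∑ y ∈ univ, (if x ⊔ a ≤ y then mu ℚ ⊥ x * mu ℚ y ⊤ else 0) := by
    rw [Finset.sum_filter]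
    refine Finset.sum_congr rfl fun x _ => ?_
    have h1 : (if x ⊔ a = ⊤ then mu ℚ ⊥ x else 0)
        = mu ℚ ⊥ x * (if x ⊔ a = ⊤ then 1 else 0) := by
      by_cases h : x ⊔ a = ⊤ <;> simp [h]
    rw [h1, ← sum_Icc_mu_left (𝕜 := ℚ) (x ⊔ a) ⊤, Finset.mul_sum]
    rw [show Icc (x ⊔ a) ⊤ = univ.filter (fun y => x ⊔ a ≤ y) by
      ext y; simp [mem_Icc, le_top]]
    rw [Finset.sum_filter]
  rw [step1, Finset.sum_comm]
  refine Finset.sum_eq_zero fun y _ => ?_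
  by_cases hay : a ≤ y
  · have : ∀ x, (if x ⊔ a ≤ y then mu ℚ ⊥ x * mu ℚ y ⊤ else 0)
        = (if x ≤ y then mu ℚ ⊥ x else 0) * mu ℚ y ⊤ := by
      intro x
      by_cases hxy : x ≤ y
      · rw [if_pos (sup_le hxy hay), if_pos hxy]
      · rw [if_neg (fun h => hxy (le_trans le_sup_left h)), if_neg hxy, zero_mul]
    rw [Finset.sum_congr rfl (fun x _ => this x), ← Finset.sum_mul]
    have : ∑ x ∈ univ, (if x ≤ y then mu ℚ ⊥ x else 0) = ∑ x ∈ Icc ⊥ y, mu ℚ ⊥ x := by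
      rw [show Icc (⊥ : α) y = univ.filter (fun x => x ≤ y) by
        ext x; simp [mem_Icc, bot_le], Finset.sum_filter]
    rw [this, sum_Icc_mu_right]
    rw [if_neg (by intro h; rw [← h] at hay; exact ha.not_ge hay), zero_mul]
  · refine Finset.sum_eq_zero fun x _ => ?_
    rw [if_neg (fun h => hay (le_trans le_sup_right h))]

end Weisner
end Generic

noncomputable section Modp
open Module

universe u

local instance instFTSub (G : Type*) [Group G] [Finite G] : Fintype (Subgroup G) :=
  Fintype.ofFinite _
local instance instFTMod (R M : Type*) [Semiring R] [AddCommMonoid M] [Module R M] [Finite M] :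
    Fintype (Submodule R M) := Fintype.ofFinite _
local instance instLFOSub (G : Type*) [Group G] [Finite G] : LocallyFiniteOrder (Subgroup G) :=
  Fintype.toLocallyFiniteOrder
local instance instLFOMod (R M : Type*) [Semiring R] [AddCommMonoid M] [Module R M] [Finite M] :
    LocallyFiniteOrder (Submodule R M) := Fintype.toLocallyFiniteOrder

/-- the Möbius value `(-1)^c p^(c choose 2)` -/
def muV (p c : ℕ) : ℚ := (-1) ^ c * (p : ℚ) ^ (c.choose 2)

lemma muV_zero (p : ℕ) : muV p 0 = 1 := by simp [muV]

lemma muV_succ (p c : ℕ) : muV p (c + 1) = -(p : ℚ) ^ c * muV p c := by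
  have h2 : (c + 1).choose 2 = c + c.choose 2 := by
    rw [show (2 : ℕ) = 1 + 1 from rfl, Nat.choose_succ_succ, Nat.choose_one_right]
  rw [muV, muV, h2, pow_add, pow_succ]
  ring

variable (p : ℕ) [Fact p.Prime]

lemma card_module (V : Type u) [AddCommGroup V] [Module (ZMod p) V] [Finite V] :
    Nat.card V = p ^ finrank (ZMod p) V := by
  haveI : NeZero p := ⟨(Fact.out : p.Prime).ne_zero⟩
  letI : Fintype V := Fintype.ofFinite V
  rw [Nat.card_eq_fintype_card, card_eq_pow_finrank (K := ZMod p) (V := V), ZMod.card]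

lemma card_submodule {V : Type u} [AddCommGroup V] [Module (ZMod p) V] [Finite V]
    (W : Submodule (ZMod p) V) :
    Nat.card W = p ^ finrank (ZMod p) W := card_module p W

lemma count_hyperplanes {V : Type u} [AddCommGroup V] [Module (ZMod p) V] [Finite V]
    (a : Submodule (ZMod p) V) (ha : finrank (ZMod p) a = 1) :
    (univ.filter (fun x : Submodule (ZMod p) V => x ⊔ a = ⊤ ∧ x ≠ ⊤)).card
      = p ^ (finrank (ZMod p) V - 1) := by
  haveI : Module.Finite (ZMod p) V := Module.Finite.of_finite
  haveI : Finite (V ⧸ a) := Finite.of_surjective _ (Submodule.Quotient.mk_surjective a)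
  have hane : a ≠ ⊥ := by
    intro h; rw [h] at ha; simp [finrank_bot] at ha
  have compl_iff : ∀ x : Submodule (ZMod p) V, (x ⊔ a = ⊤ ∧ x ≠ ⊤) ↔ IsCompl a x := by
    intro x
    constructor
    · rintro ⟨hsup, hne⟩
      constructor
      · rw [disjoint_iff]
        by_contra hne0
        have hle : finrank (ZMod p) (a ⊓ x : Submodule (ZMod p) V) ≤ 1 := by
          rw [← ha]; exact Submodule.finrank_mono inf_le_left
        have h1 : finrank (ZMod p) (a ⊓ x : Submodule (ZMod p) V) = 1 := by
          rcases Nat.lt_or_ge (finrank (ZMod p) (a ⊓ x : Submodule (ZMod p) V)) 1 with h | h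
          · exact absurd (Submodule.finrank_eq_zero.1 (by omega)) hne0
          · omega
        have heq : a ⊓ x = a :=
          Submodule.eq_of_le_of_finrank_eq inf_le_left (h1.trans ha.symm)
        have hax : a ≤ x := inf_eq_left.1 heq
        exact hne (by rw [← hsup, sup_eq_left.2 hax])
      · rw [codisjoint_iff, sup_comm]; exact hsup
    · rintro h
      refine ⟨by rw [sup_comm]; exact codisjoint_iff.1 h.codisjoint, ?_⟩
      rintro rfl
      exact hane (by simpa [disjoint_iff] using h.disjoint)
  rw [← Fintype.card_subtype, ← Nat.card_eq_fintype_card]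
  obtain ⟨q, hq⟩ := Submodule.exists_isCompl a
  let f0 : {f : V →ₗ[ZMod p] a // ∀ y : a, f y = y} := a.isComplEquivProj ⟨q, hq⟩
  have e3 : {f : V →ₗ[ZMod p] a // ∀ y : a, f y = y} ≃ ((V ⧸ a) →ₗ[ZMod p] a) := by
    refine ⟨fun f => a.liftQ (f.1 - f0.1) ?_, fun g => ⟨f0.1 + g ∘ₗ a.mkQ, ?_⟩, ?_, ?_⟩
    · intro y hy
      rw [LinearMap.mem_ker, LinearMap.sub_apply, f.2 ⟨y, hy⟩, f0.2 ⟨y, hy⟩, sub_self]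
    · intro y
      have hmk : a.mkQ (y : V) = 0 := by
        rw [Submodule.mkQ_apply, Submodule.Quotient.mk_eq_zero]; exact y.2
      simp [LinearMap.add_apply, LinearMap.comp_apply, hmk, f0.2 y]
    · intro f
      apply Subtype.ext
      have := Submodule.liftQ_mkQ (p := a) (f.1 - f0.1)
        (by intro y hy
            rw [LinearMap.mem_ker, LinearMap.sub_apply, f.2 ⟨y, hy⟩, f0.2 ⟨y, hy⟩, sub_self])
      simp only []
      rw [this]
      abel
    · intro g
      apply Submodule.linearMap_qext
      ext x
      simp [Submodule.liftQ_apply]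
  have hd : finrank (ZMod p) (V ⧸ a) = finrank (ZMod p) V - 1 := by
    have := Submodule.finrank_quotient_add_finrank a
    omega
  calc Nat.card {x : Submodule (ZMod p) V // x ⊔ a = ⊤ ∧ x ≠ ⊤}
      = Nat.card {q // IsCompl a q} :=
        Nat.card_congr (Equiv.subtypeEquivRight compl_iff)
    _ = Nat.card {f : V →ₗ[ZMod p] a // ∀ y : a, f y = y} :=
        Nat.card_congr a.isComplEquivProj
    _ = Nat.card ((V ⧸ a) →ₗ[ZMod p] a) := Nat.card_congr e3
    _ = Nat.card (Fin (finrank (ZMod p) (V ⧸ a)) → a) :=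
        (Nat.card_congr ((Module.finBasis (ZMod p) (V ⧸ a)).constr (ZMod p)).toEquiv).symm
    _ = Nat.card a ^ finrank (ZMod p) (V ⧸ a) := by
        rw [Nat.card_fun, Nat.card_eq_fintype_card (α := Fin _), Fintype.card_fin]
    _ = p ^ (finrank (ZMod p) V - 1) := by
        rw [card_submodule p a, ha, pow_one, hd]

theorem mu_bot_top : ∀ (V : Type u) [AddCommGroup V] [Module (ZMod p) V] [Finite V],
    mu ℚ (⊥ : Submodule (ZMod p) V) ⊤ = muV p (finrank (ZMod p) V) := by
  suffices h : ∀ (m : ℕ) (V : Type u) [AddCommGroup V] [Module (ZMod p) V] [Finite V],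
      Nat.card V ≤ m → mu ℚ (⊥ : Submodule (ZMod p) V) ⊤ = muV p (finrank (ZMod p) V) by
    intro V _ _ _
    exact h (Nat.card V) V le_rfl
  intro m
  induction m with
  | zero =>
    intro V _ _ _ hc
    exact absurd (Nat.card_pos (α := V)) (by omega)
  | succ m ih =>
    intro V _ _ _ hc
    haveI : Module.Finite (ZMod p) V := Module.Finite.of_finite
    by_cases h0 : finrank (ZMod p) V = 0
    · haveI : Subsingleton V := Module.finrank_zero_iff.1 h0
      have hbt : (⊥ : Submodule (ZMod p) V) = ⊤ := by
        ext x; simp [Subsingleton.elim x 0]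
      rw [hbt, h0, muV_zero, IncidenceAlgebra.mu_self]
    · obtain ⟨c, hcrk⟩ : ∃ c, finrank (ZMod p) V = c + 1 :=
        ⟨finrank (ZMod p) V - 1, by omega⟩
      haveI : Nontrivial V := (Module.finrank_pos_iff (R := ZMod p) (M := V)).1 (by omega)
      obtain ⟨v, hv⟩ := exists_ne (0 : V)
      set a := Submodule.span (ZMod p) {v} with ha_def
      have hra : finrank (ZMod p) a = 1 := finrank_span_singleton hv
      have hba : (⊥ : Submodule (ZMod p) V) < a := by
        rw [bot_lt_iff_ne_bot]
        simpa [ha_def, Submodule.span_singleton_eq_bot] using hv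
      have hw : ∑ x ∈ univ.filter (fun x : Submodule (ZMod p) V => x ⊔ a = ⊤), mu ℚ ⊥ x = 0 := by
        convert weisner_bot (α := Submodule (ZMod p) V) hba
      have htop : (⊤ : Submodule (ZMod p) V) ∈ univ.filter (fun x => x ⊔ a = ⊤) := by simp
      rw [← Finset.add_sum_erase _ _ htop] at hw
      have herase : (univ.filter (fun x : Submodule (ZMod p) V => x ⊔ a = ⊤)).erase ⊤
          = univ.filter (fun x => x ⊔ a = ⊤ ∧ x ≠ ⊤) := by
        ext x
        simp only [Finset.mem_erase, Finset.mem_filter, Finset.mem_univ, true_and]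
        tauto
      rw [herase] at hw
      have key : ∀ x ∈ univ.filter
          (fun x : Submodule (ZMod p) V => x ⊔ a = ⊤ ∧ x ≠ ⊤), mu ℚ ⊥ x = muV p c := by
        intro x hx
        obtain ⟨hsup, hne⟩ := (Finset.mem_filter.1 hx).2
        have hfx : finrank (ZMod p) x = c := by
          have h1 := Submodule.finrank_sup_add_finrank_inf_eq x a
          have h2 : finrank (ZMod p) (x ⊓ a : Submodule (ZMod p) V) = 0 := by
            by_contra hh
            have hle : finrank (ZMod p) (x ⊓ a : Submodule (ZMod p) V) ≤ 1 := by
              rw [← hra]; exact Submodule.finrank_mono inf_le_right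
            have h1' : finrank (ZMod p) (x ⊓ a : Submodule (ZMod p) V) = 1 := by omega
            have heq : x ⊓ a = a :=
              Submodule.eq_of_le_of_finrank_eq inf_le_right (h1'.trans hra.symm)
            have hax : a ≤ x := inf_eq_right.1 heq
            exact hne (by rw [← hsup, sup_eq_left.2 hax])
          rw [hsup, finrank_top] at h1
          have h3 : finrank (ZMod p) x < finrank (ZMod p) V :=
            Submodule.finrank_lt hne
          omega
        have htrans := mu_orderIso_subtype (P := fun q : Submodule (ZMod p) V => q ≤ x)
          (fun _ _ _ _ hz _ hyz => le_trans hyz hz)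
          (Submodule.MapSubtype.orderIso x) ⊥ ⊤
        have hb : ((Submodule.MapSubtype.orderIso x ⊥ : {q : Submodule (ZMod p) V // q ≤ x}) :
            Submodule (ZMod p) V) = ⊥ := by
          show Submodule.map x.subtype ⊥ = ⊥
          exact Submodule.map_bot _
        have ht : ((Submodule.MapSubtype.orderIso x ⊤ : {q : Submodule (ZMod p) V // q ≤ x}) :
            Submodule (ZMod p) V) = x := by
          show Submodule.map x.subtype ⊤ = x
          rw [Submodule.map_top, Submodule.range_subtype]
        rw [hb, ht] at htrans
        have hcard : Nat.card x ≤ m := by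
          have hlt : x < ⊤ := lt_top_iff_ne_top.2 hne
          have hss : (x : Set V) ⊂ Set.univ := by
            constructor
            · exact Set.subset_univ _
            · intro hsub
              refine hne (Submodule.eq_top_iff'.2 fun y => hsub (Set.mem_univ y))
          have hlt2 := Set.ncard_lt_ncard hss Set.finite_univ
          rw [Set.ncard_univ] at hlt2
          have hceq : Nat.card x = (x : Set V).ncard := by
            rw [← Nat.card_coe_set_eq]; rfl
          omega
        rw [show mu ℚ (⊥ : Submodule (ZMod p) V) x = mu ℚ (⊥ : Submodule (ZMod p) x) ⊤ from htrans, ih x hcard, hfx]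
      rw [Finset.sum_congr rfl key, Finset.sum_const, count_hyperplanes p a hra] at hw
      have hc1 : finrank (ZMod p) V - 1 = c := by omega
      rw [hc1] at hw
      have : mu ℚ (⊥ : Submodule (ZMod p) V) ⊤ = -((p : ℚ) ^ c * muV p c) := by
        have := hw
        rw [nsmul_eq_mul] at this
        push_cast at this
        linarith
      rw [this, hcrk, muV_succ]
      ring

theorem mu_X_top (V : Type u) [AddCommGroup V] [Module (ZMod p) V] [Finite V]
    (X : Submodule (ZMod p) V) :
    mu ℚ X (⊤ : Submodule (ZMod p) V)
      = muV p (finrank (ZMod p) V - finrank (ZMod p) X) := by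
  haveI : Module.Finite (ZMod p) V := Module.Finite.of_finite
  haveI : Finite (V ⧸ X) := Finite.of_surjective _ (Submodule.Quotient.mk_surjective X)
  have htrans := mu_orderIso_subtype (P := fun q : Submodule (ZMod p) V => X ≤ q)
    (fun _ _ _ hx _ hxy _ => le_trans hx hxy)
    (Submodule.comapMkQRelIso X) ⊥ ⊤
  have hb : ((Submodule.comapMkQRelIso X ⊥ : {q : Submodule (ZMod p) V // X ≤ q}) :
      Submodule (ZMod p) V) = X := by
    show Submodule.comap X.mkQ ⊥ = X
    rw [Submodule.comap_bot, Submodule.ker_mkQ]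
  have ht : ((Submodule.comapMkQRelIso X ⊤ : {q : Submodule (ZMod p) V // X ≤ q}) :
      Submodule (ZMod p) V) = ⊤ := by
    show Submodule.comap X.mkQ ⊤ = ⊤
    exact Submodule.comap_top _
  replace htrans : mu ℚ X (⊤ : Submodule (ZMod p) V) = mu ℚ (⊥ : Submodule (ZMod p) (V ⧸ X)) ⊤ :=
    (congrArg₂ (fun a b => mu ℚ a b) hb ht).symm.trans htrans
  rw [htrans, mu_bot_top p (V ⧸ X)]
  congr 1
  have := Submodule.finrank_quotient_add_finrank X
  omega

theorem main_count : ∀ (k : ℕ) (s : ℤ) (V : Type u) [AddCommGroup V] [Module (ZMod p) V]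
    [Finite V] (N : Submodule (ZMod p) V), finrank (ZMod p) N = k →
    ∑ X ∈ univ.filter (fun X : Submodule (ZMod p) V => X ⊔ N = ⊤),
      (p : ℚ) ^ (s * (finrank (ZMod p) X : ℤ))
        * muV p (finrank (ZMod p) V - finrank (ZMod p) X)
    = (p : ℚ) ^ (s * (finrank (ZMod p) V : ℤ)) *
        ∏ i ∈ Icc 1 k, (1 - (p : ℚ) ^ ((finrank (ZMod p) V : ℤ) - s - (i : ℤ))) := by
  have hp0 : (p : ℚ) ≠ 0 := by
    exact_mod_cast (Fact.out : p.Prime).ne_zero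
  intro k
  induction k with
  | zero =>
    intro s V _ _ _ N hN
    haveI : Module.Finite (ZMod p) V := Module.Finite.of_finite
    have hNbot : N = ⊥ := Submodule.finrank_eq_zero.1 hN
    subst hNbot
    have hfil : univ.filter (fun X : Submodule (ZMod p) V => X ⊔ ⊥ = ⊤) = {⊤} := by
      ext X; simp
    rw [hfil, Finset.sum_singleton, finrank_top, Nat.sub_self, muV_zero]
    simp
  | succ k ih =>
    intro s V _ _ _ N hN
    haveI : Module.Finite (ZMod p) V := Module.Finite.of_finite
    set n := finrank (ZMod p) V with hn_def
    have hkn : k + 1 ≤ n := hN ▸ Submodule.finrank_le N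
    -- basis of N, split off last vector
    let b : Basis (Fin (k + 1)) (ZMod p) N := (Module.finBasis (ZMod p) N).reindex (finCongr hN)
    let w : Fin (k + 1) → V := fun i => ((b i : N) : V)
    have hw_li : LinearIndependent (ZMod p) w :=
      b.linearIndependent.map' N.subtype (Submodule.ker_subtype N)
    have hspan : Submodule.span (ZMod p) (Set.range w) = N := by
      have h1 : Set.range w = N.subtype '' Set.range b := by
        rw [← Set.range_comp]; rfl
      rw [h1, ← Submodule.map_span, Basis.span_eq, Submodule.map_top, Submodule.range_subtype]
    set N' : Submodule (ZMod p) V :=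
      Submodule.span (ZMod p) (Set.range (w ∘ Fin.castSucc)) with hN'_def
    set v : V := w (Fin.last k) with hv_def
    have hv0 : v ≠ 0 := hw_li.ne_zero (Fin.last k)
    have hN'rank : finrank (ZMod p) N' = k := by
      rw [hN'_def, finrank_span_eq_card (hw_li.comp Fin.castSucc (Fin.castSucc_injective k))]
      simp
    have hrange : Set.range w = Set.range (w ∘ Fin.castSucc) ∪ {v} := by
      ext y
      constructor
      · rintro ⟨i, rfl⟩
        rcases Fin.eq_castSucc_or_eq_last i with ⟨j, rfl⟩ | rfl
        · exact Or.inl ⟨j, rfl⟩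
        · exact Or.inr rfl
      · rintro (⟨j, rfl⟩ | rfl)
        · exact ⟨Fin.castSucc j, rfl⟩
        · exact ⟨Fin.last k, rfl⟩
    have hNsplit : N' ⊔ Submodule.span (ZMod p) {v} = N := by
      rw [hN'_def, ← Submodule.span_union, ← hrange, hspan]
    have hN'leN : N' ≤ N := by
      rw [← hNsplit]; exact le_sup_left
    have hvN' : v ∉ N' := by
      rw [hN'_def, show Set.range (w ∘ Fin.castSucc) = w '' Set.range Fin.castSucc from
        (Set.range_comp _ _)]
      refine hw_li.notMem_span_image ?_
      rintro ⟨j, hj⟩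
      exact absurd hj (Fin.castSucc_lt_last j).ne
    -- quotient data
    haveI : Finite (V ⧸ N') := Finite.of_surjective _ (Submodule.Quotient.mk_surjective N')
    set abar : Submodule (ZMod p) (V ⧸ N') := Submodule.map N'.mkQ N with habar_def
    have habar : abar = Submodule.span (ZMod p) {N'.mkQ v} := by
      rw [habar_def, ← hNsplit, Submodule.map_sup]
      have h1 : Submodule.map N'.mkQ N' = ⊥ := by
        rw [eq_bot_iff]
        rintro y ⟨x, hx, rfl⟩
        simp [Submodule.mkQ_apply, (Submodule.Quotient.mk_eq_zero N').2 hx]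
      have h2 : Submodule.map N'.mkQ (Submodule.span (ZMod p) {v})
          = Submodule.span (ZMod p) {N'.mkQ v} := by
        rw [Submodule.map_span, Set.image_singleton]
      rw [h1, h2, bot_sup_eq]
    have hvbar : N'.mkQ v ≠ 0 := by
      rw [Ne, Submodule.mkQ_apply, Submodule.Quotient.mk_eq_zero]
      exact hvN'
    have habar_rank : finrank (ZMod p) abar = 1 := by
      rw [habar]; exact finrank_span_singleton hvbar
    have hQrank : finrank (ZMod p) (V ⧸ N') + k = n := by
      have := Submodule.finrank_quotient_add_finrank N'
      omega
    -- rank of map under mkQ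
    have hrank_map : ∀ H : Submodule (ZMod p) V, N' ≤ H →
        finrank (ZMod p) (Submodule.map N'.mkQ H) + k = finrank (ZMod p) H := by
      intro H hH
      have h1 := LinearMap.finrank_range_add_finrank_ker (N'.mkQ.comp H.subtype)
      have h2 : LinearMap.range (N'.mkQ.comp H.subtype) = Submodule.map N'.mkQ H := by
        rw [LinearMap.range_comp, Submodule.range_subtype]
      have h3 : LinearMap.ker (N'.mkQ.comp H.subtype) = Submodule.comap H.subtype N' := by
        rw [LinearMap.ker_comp, Submodule.ker_mkQ]
      have h4 : finrank (ZMod p) (Submodule.comap H.subtype N') = k := by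
        rw [(Submodule.comapSubtypeEquivOfLe hH).finrank_eq, hN'rank]
      rw [h2, h3, h4] at h1
      omega
    -- span v has rank one
    have hrkv : finrank (ZMod p) (Submodule.span (ZMod p) {v}) = 1 :=
      finrank_span_singleton hv0
    -- hyperplanes containing N' but not N
    have hyp_top : ∀ H : Submodule (ZMod p) V, ¬ N ≤ H → finrank (ZMod p) H = n - 1 →
        H ⊔ N = ⊤ := by
      intro H hnleH hrkH
      have hlt : H < H ⊔ N := by
        rcases lt_or_eq_of_le (le_sup_left : H ≤ H ⊔ N) with h | h
        · exact h
        · exact absurd (le_sup_right.trans h.ge) hnleH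
      have h1 : finrank (ZMod p) (H ⊔ N : Submodule (ZMod p) V) ≤ n :=
        Submodule.finrank_le _
      have h2 := Submodule.finrank_lt_finrank_of_lt hlt
      exact Submodule.eq_top_of_finrank_eq (by omega)
    set HS := univ.filter (fun H : Submodule (ZMod p) V =>
      N' ≤ H ∧ ¬ N ≤ H ∧ finrank (ZMod p) H = n - 1) with hHS_def
    have hHS_card : HS.card = p ^ (n - (k + 1)) := by
      have hcount := count_hyperplanes p (V := V ⧸ N') abar habar_rank
      have hbij : HS.card = (univ.filter (fun x : Submodule (ZMod p) (V ⧸ N') =>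
          x ⊔ abar = ⊤ ∧ x ≠ ⊤)).card := by
        refine Finset.card_nbij' (fun H => Submodule.map N'.mkQ H)
          (fun x => Submodule.comap N'.mkQ x) ?_ ?_ ?_ ?_
        · intro H hH
          simp only [hHS_def, Finset.mem_coe, Finset.mem_filter, Finset.mem_univ, true_and] at hH ⊢
          obtain ⟨hN'H, hnleH, hrkH⟩ := hH
          constructor
          · rw [← Submodule.map_sup, hyp_top H hnleH hrkH, Submodule.map_top,
              Submodule.range_mkQ]
          · intro htop
            have := hrank_map H hN'H
            rw [htop, finrank_top] at this
            omega
        · intro x hx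
          simp only [Finset.mem_coe, Finset.mem_filter, Finset.mem_univ, true_and] at hx
          obtain ⟨hsup, hne⟩ := hx
          simp only [hHS_def, Finset.mem_coe, Finset.mem_filter, Finset.mem_univ, true_and]
          have hcle : N' ≤ Submodule.comap N'.mkQ x := by
            have := LinearMap.ker_le_comap (p := x) N'.mkQ
            rwa [Submodule.ker_mkQ] at this
          have hmapc : Submodule.map N'.mkQ (Submodule.comap N'.mkQ x) = x :=
            Submodule.map_comap_eq_of_surjective (Submodule.Quotient.mk_surjective N') x
          refine ⟨hcle, ?_, ?_⟩
          · intro hNle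
            have : abar ≤ x := by
              rw [habar_def, ← hmapc]
              exact Submodule.map_mono hNle
            exact hne (by rw [← hsup, sup_eq_left.2 this])
          · -- finrank of comap
            have h1 := hrank_map _ hcle
            rw [hmapc] at h1
            -- finrank x = finrank (V ⧸ N') - 1
            have h2 := Submodule.finrank_sup_add_finrank_inf_eq x abar
            rw [hsup, finrank_top, habar_rank] at h2
            have h3 : finrank (ZMod p) x < finrank (ZMod p) (V ⧸ N') :=
              Submodule.finrank_lt hne
            omega
        · intro H hH
          simp only [hHS_def, Finset.mem_coe, Finset.mem_filter, Finset.mem_univ, true_and] at hH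
          show Submodule.comap N'.mkQ (Submodule.map N'.mkQ H) = H
          rw [Submodule.comap_map_eq, Submodule.ker_mkQ, sup_eq_left.2 hH.1]
        · intro x hx
          show Submodule.map N'.mkQ (Submodule.comap N'.mkQ x) = x
          exact Submodule.map_comap_eq_of_surjective (Submodule.Quotient.mk_surjective N') x
      rw [hbij, hcount]
      congr 1
      omega
    -- partition of the sum
    set f : Submodule (ZMod p) V → ℚ := fun X =>
      (p : ℚ) ^ (s * (finrank (ZMod p) X : ℤ)) * muV p (n - finrank (ZMod p) X) with hf_def
    set A := univ.filter (fun X : Submodule (ZMod p) V => X ⊔ N = ⊤) with hA_def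
    set B := univ.filter (fun X : Submodule (ZMod p) V => X ⊔ N' = ⊤) with hB_def
    have hBA : B ⊆ A := by
      intro X hX
      simp only [hA_def, hB_def, Finset.mem_filter, Finset.mem_univ, true_and] at hX ⊢
      rw [eq_top_iff, ← hX]
      exact sup_le_sup_left hN'leN X
    have hsplit : ∑ X ∈ A, f X = ∑ X ∈ B, f X + ∑ X ∈ A \ B, f X := by
      rw [add_comm, Finset.sum_sdiff hBA]
    -- the B part by induction
    have hBval : ∑ X ∈ B, f X = (p : ℚ) ^ (s * (n : ℤ)) *
        ∏ i ∈ Icc 1 k, (1 - (p : ℚ) ^ ((n : ℤ) - s - (i : ℤ))) := ih s V N' hN'rank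
    -- fiberwise decomposition of A \ B
    have hmaps : ∀ X ∈ A \ B, X ⊔ N' ∈ HS := by
      intro X hX
      rw [Finset.mem_sdiff] at hX
      obtain ⟨hXA, hXB⟩ := hX
      simp only [hA_def, hB_def, Finset.mem_filter, Finset.mem_univ, true_and] at hXA hXB
      simp only [hHS_def, Finset.mem_filter, Finset.mem_univ, true_and]
      have hXle : X ≤ X ⊔ N' := le_sup_left
      have hnle : ¬ N ≤ X ⊔ N' := by
        intro hNle
        refine hXB ?_
        rw [eq_top_iff, ← hXA]
        exact sup_le (le_sup_left) (hNle.trans le_rfl)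
      refine ⟨le_sup_right, hnle, ?_⟩
      -- finrank computation
      have hsupv : (X ⊔ N') ⊔ Submodule.span (ZMod p) {v} = ⊤ := by
        rw [sup_assoc, hNsplit, hXA]
      have h2 := Submodule.finrank_sup_add_finrank_inf_eq (X ⊔ N')
        (Submodule.span (ZMod p) {v})
      rw [hsupv, finrank_top, hrkv] at h2
      have h3 : finrank (ZMod p) (X ⊔ N' : Submodule (ZMod p) V) < n :=
        Submodule.finrank_lt hXB
      omega
    have hfiber : ∑ X ∈ A \ B, f X = ∑ H ∈ HS, ∑ X ∈ (A \ B).filter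
        (fun X => X ⊔ N' = H), f X :=
      (Finset.sum_fiberwise_of_maps_to hmaps f).symm
    -- identify fibers
    have hfib_eq : ∀ H ∈ HS, (A \ B).filter (fun X => X ⊔ N' = H)
        = univ.filter (fun X : Submodule (ZMod p) V => X ⊔ N' = H) := by
      intro H hH
      simp only [hHS_def, Finset.mem_filter, Finset.mem_univ, true_and] at hH
      obtain ⟨hN'H, hnleH, hrkH⟩ := hH
      ext X
      simp only [Finset.mem_filter, Finset.mem_sdiff, hA_def, hB_def, Finset.mem_filter,
        Finset.mem_univ, true_and]
      constructor
      · rintro ⟨_, hXN'⟩; exact hXN'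
      · intro hXN'
        have hHne : H ≠ ⊤ := fun h => hnleH (h ▸ le_top)
        refine ⟨⟨?_, ?_⟩, hXN'⟩
        · have h1 : H ⊔ N = ⊤ := hyp_top H hnleH hrkH
          rw [← hXN', sup_assoc, sup_eq_right.2 hN'leN] at h1
          exact h1
        · rw [hXN']; exact hHne

    -- evaluate each fiber
    have hinner : ∀ H ∈ HS, ∑ X ∈ univ.filter
        (fun X : Submodule (ZMod p) V => X ⊔ N' = H), f X
        = -((p : ℚ) ^ (n - 1)) * ((p : ℚ) ^ ((s - 1) * ((n : ℤ) - 1)) *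
            ∏ i ∈ Icc 1 k, (1 - (p : ℚ) ^ ((n : ℤ) - s - (i : ℤ)))) := by
      intro H hH
      simp only [hHS_def, Finset.mem_filter, Finset.mem_univ, true_and] at hH
      obtain ⟨hN'H, hnleH, hrkH⟩ := hH
      set N'' : Submodule (ZMod p) H := Submodule.comap H.subtype N' with hN''_def
      have hN''rank : finrank (ZMod p) N'' = k := by
        rw [hN''_def, (Submodule.comapSubtypeEquivOfLe hN'H).finrank_eq, hN'rank]
      have htrans : ∑ X ∈ univ.filter (fun X : Submodule (ZMod p) V => X ⊔ N' = H), f X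
          = ∑ Y ∈ univ.filter (fun Y : Submodule (ZMod p) H => Y ⊔ N'' = ⊤),
              (p : ℚ) ^ (s * (finrank (ZMod p) Y : ℤ))
                * muV p (n - finrank (ZMod p) Y) := by
        refine Finset.sum_nbij' (fun X => Submodule.comap H.subtype X)
          (fun Y => Submodule.map H.subtype Y) ?_ ?_ ?_ ?_ ?_
        · intro X hX
          rw [Finset.mem_filter] at hX ⊢
          obtain ⟨-, hXN'⟩ := hX
          have hXle : X ≤ H := le_sup_left.trans hXN'.le
          refine ⟨Finset.mem_univ _, ?_⟩
          apply Submodule.map_injective_of_injective (Submodule.injective_subtype H)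
          rw [Submodule.map_sup, Submodule.map_comap_subtype, hN''_def,
            Submodule.map_comap_subtype, Submodule.map_top, Submodule.range_subtype,
            inf_eq_right.2 hXle, inf_eq_right.2 hN'H]
          exact hXN'
        · intro Y hY
          rw [Finset.mem_filter] at hY ⊢
          refine ⟨Finset.mem_univ _, ?_⟩
          have h5 := congrArg (Submodule.map H.subtype) hY.2
          rw [Submodule.map_sup, hN''_def, Submodule.map_comap_subtype,
            inf_eq_right.2 hN'H, Submodule.map_top, Submodule.range_subtype] at h5
          exact h5
        · intro X hX
          rw [Finset.mem_filter] at hX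
          have hXle : X ≤ H := le_sup_left.trans hX.2.le
          show Submodule.map H.subtype (Submodule.comap H.subtype X) = X
          rw [Submodule.map_comap_subtype, inf_eq_right.2 hXle]
        · intro Y hY
          show Submodule.comap H.subtype (Submodule.map H.subtype Y) = Y
          rw [Submodule.comap_map_eq, Submodule.ker_subtype, sup_bot_eq]
        · intro X hX
          rw [Finset.mem_filter] at hX
          have hXle : X ≤ H := le_sup_left.trans hX.2.le
          have hfr : finrank (ZMod p) (Submodule.comap H.subtype X)
              = finrank (ZMod p) X := (Submodule.comapSubtypeEquivOfLe hXle).finrank_eq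
          simp only [hf_def, hfr]
      have hsummand : ∀ Y ∈ univ.filter (fun Y : Submodule (ZMod p) H => Y ⊔ N'' = ⊤),
          (p : ℚ) ^ (s * (finrank (ZMod p) Y : ℤ)) * muV p (n - finrank (ZMod p) Y)
          = -((p : ℚ) ^ (n - 1)) * ((p : ℚ) ^ ((s - 1) * (finrank (ZMod p) Y : ℤ))
              * muV p (finrank (ZMod p) H - finrank (ZMod p) Y)) := by
        intro Y _
        have hfY : finrank (ZMod p) Y ≤ n - 1 := by
          have := Submodule.finrank_le Y
          omega
        have h1 : n - finrank (ZMod p) Y = (n - 1 - finrank (ZMod p) Y) + 1 := by omega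
        have h1' : finrank (ZMod p) H - finrank (ZMod p) Y
            = n - 1 - finrank (ZMod p) Y := by omega
        rw [h1, h1', muV_succ]
        have h2 : (p : ℚ) ^ (s * (finrank (ZMod p) Y : ℤ))
            = (p : ℚ) ^ ((s - 1) * (finrank (ZMod p) Y : ℤ))
              * (p : ℚ) ^ (finrank (ZMod p) Y) := by
          rw [← zpow_natCast (p : ℚ) (finrank (ZMod p) Y), ← zpow_add₀ hp0]
          congr 1; ring
        have h3 : (p : ℚ) ^ (finrank (ZMod p) Y) * (p : ℚ) ^ (n - 1 - finrank (ZMod p) Y)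
            = (p : ℚ) ^ (n - 1) := by
          rw [← pow_add]; congr 1; omega
        rw [h2, ← h3]; ring
      rw [htrans, Finset.sum_congr rfl hsummand, ← Finset.mul_sum,
        ih (s - 1) H N'' hN''rank, hrkH]
      have hcast : ((n - 1 : ℕ) : ℤ) = (n : ℤ) - 1 := by omega
      rw [hcast]
      congr 1
      congr 1
      refine Finset.prod_congr rfl fun i _ => ?_
      congr 1
      congr 1
      ring
    -- sum over the fibers
    have hAB : ∑ X ∈ A \ B, f X = (p : ℚ) ^ (n - (k + 1)) *
        (-((p : ℚ) ^ (n - 1)) * ((p : ℚ) ^ ((s - 1) * ((n : ℤ) - 1)) *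
          ∏ i ∈ Icc 1 k, (1 - (p : ℚ) ^ ((n : ℤ) - s - (i : ℤ))))) := by
      rw [hfiber, Finset.sum_congr rfl (fun H hH => by rw [hfib_eq H hH, hinner H hH]),
        Finset.sum_const, hHS_card, nsmul_eq_mul]
      push_cast
      ring
    -- final algebra
    have hprod : ∏ i ∈ Icc 1 (k + 1), (1 - (p : ℚ) ^ ((n : ℤ) - s - (i : ℤ)))
        = (∏ i ∈ Icc 1 k, (1 - (p : ℚ) ^ ((n : ℤ) - s - (i : ℤ))))
          * (1 - (p : ℚ) ^ ((n : ℤ) - s - ((k + 1 : ℕ) : ℤ))) := by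
      exact Finset.prod_Icc_succ_top (by omega) _
    have hgoal := hsplit
    rw [hBval, hAB] at hgoal
    rw [hgoal, hprod]
    have hz1 : (p : ℚ) ^ (n - (k + 1)) = (p : ℚ) ^ ((n : ℤ) - (k + 1)) := by
      rw [← zpow_natCast]; congr 1; omega
    have hz2 : (p : ℚ) ^ (n - 1) = (p : ℚ) ^ ((n : ℤ) - 1) := by
      rw [← zpow_natCast]; congr 1; omega
    rw [hz1, hz2]
    have key : (p : ℚ) ^ ((n : ℤ) - (k + 1)) * ((p : ℚ) ^ ((n : ℤ) - 1)
          * (p : ℚ) ^ ((s - 1) * ((n : ℤ) - 1)))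
        = (p : ℚ) ^ (s * (n : ℤ)) * (p : ℚ) ^ ((n : ℤ) - s - ((k + 1 : ℕ) : ℤ)) := by
      rw [← zpow_add₀ hp0, ← zpow_add₀ hp0, ← zpow_add₀ hp0]
      congr 1
      push_cast
      ring
    linear_combination (-(∏ i ∈ Icc 1 k, (1 - (p : ℚ) ^ ((n : ℤ) - s - (i : ℤ))))) * key

/-- For an elementary abelian p-group G of rank n > 2 and a subgroup N of rank k
with 1 ≤ k ≤ n − 2, we have m(G,N) = ∏_{i=1}^{k} (1 − p^{n−1−i}). -/
theorem mBouc_elementaryAbelian (p n k : ℕ) (hp : p.Prime) (hn : 2 < n)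
    (hk1 : 1 ≤ k) (hk2 : k ≤ n - 2)
    (G : Type*) [CommGroup G] [Finite G] (hexp : ∀ g : G, g ^ p = 1)
    (hcard : Nat.card G = p ^ n) (N : Subgroup G) (hN : Nat.card N = p ^ k) :
    mBouc G N = ∏ i ∈ Finset.Icc 1 k, (1 - (p : ℚ) ^ (n - 1 - i)) := by
  haveI : Fact p.Prime := ⟨hp⟩
  have hsmul : ∀ x : Additive G, p • x = 0 := by
    intro x
    rw [show x = Additive.ofMul x.toMul from rfl, ← ofMul_pow, hexp]
    rfl
  haveI : Module (ZMod p) (Additive G) := AddCommGroup.zmodModule hsmul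
  let E : Subgroup G ≃o Submodule (ZMod p) (Additive G) :=
    (Subgroup.toAddSubgroup (G := G)).trans (AddSubgroup.toZModSubmodule (M := Additive G) p)
  have hp0 : (p : ℚ) ≠ 0 := by exact_mod_cast hp.ne_zero
  have hcV : Nat.card (Additive G) = p ^ n := hcard
  have hnV : finrank (ZMod p) (Additive G) = n := by
    have h1 := card_module p (Additive G)
    rw [hcV] at h1
    exact (Nat.pow_right_injective hp.two_le h1.symm)
  have hcardE : ∀ X : Subgroup G, Nat.card X = Nat.card (E X : Submodule (ZMod p) (Additive G)) :=
    fun X => rfl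
  have hkE : finrank (ZMod p) (E N : Submodule (ZMod p) (Additive G)) = k := by
    have h1 := card_submodule p (E N)
    rw [← hcardE N, hN] at h1
    exact (Nat.pow_right_injective hp.two_le h1.symm)
  have hunfold : mBouc G N = (1 / (Nat.card G : ℚ)) *
      ∑ X ∈ univ.filter (fun X : Subgroup G => X ⊔ N = ⊤),
        (Nat.card X : ℚ) * subgroupMoebius G X ⊤ := rfl
  have hmuE : ∀ X : Subgroup G,
      subgroupMoebius G X ⊤ = mu ℚ (E X) (⊤ : Submodule (ZMod p) (Additive G)) := by
    intro X
    have h1 : subgroupMoebius G X ⊤ = mu ℚ X (⊤ : Subgroup G) := rfl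
    have h2 := mu_orderIso (α := Submodule (ZMod p) (Additive G)) (β := Subgroup G) E X ⊤
    rw [h1, ← h2, E.map_top]
    rfl
  have hsum : ∑ X ∈ univ.filter (fun X : Subgroup G => X ⊔ N = ⊤),
      (Nat.card X : ℚ) * subgroupMoebius G X ⊤
      = ∑ Y ∈ univ.filter (fun Y : Submodule (ZMod p) (Additive G) => Y ⊔ E N = ⊤),
        (p : ℚ) ^ ((1 : ℤ) * (finrank (ZMod p) Y : ℤ))
          * muV p (finrank (ZMod p) (Additive G) - finrank (ZMod p) Y) := by
    refine Finset.sum_nbij' (fun X => E X) (fun Y => E.symm Y) ?_ ?_ ?_ ?_ ?_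
    · intro X hX
      rw [Finset.mem_filter] at hX ⊢
      refine ⟨Finset.mem_univ _, ?_⟩
      rw [← E.map_sup, hX.2]
      exact E.map_top
    · intro Y hY
      rw [Finset.mem_filter] at hY ⊢
      refine ⟨Finset.mem_univ _, ?_⟩
      apply E.injective
      rw [E.map_sup, E.apply_symm_apply, E.map_top]
      exact hY.2
    · intro X _; exact E.symm_apply_apply X
    · intro Y _; exact E.apply_symm_apply Y
    · intro X _
      rw [hmuE X, mu_X_top p (Additive G) (E X), hcardE X, card_submodule p (E X)]
      rw [one_mul, zpow_natCast]
      push_cast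
      ring
  rw [hunfold, hsum, main_count p k 1 (Additive G) (E N) hkE, hnV, hcard]
  have hprod : ∀ i ∈ Icc 1 k, (1 - (p : ℚ) ^ ((n : ℤ) - 1 - (i : ℤ)))
      = (1 - (p : ℚ) ^ (n - 1 - i)) := by
    intro i hi
    rw [Finset.mem_Icc] at hi
    congr 1
    rw [← zpow_natCast]
    congr 1
    omega
  rw [Finset.prod_congr rfl hprod]
  have hpow : (p : ℚ) ^ ((1 : ℤ) * (n : ℤ)) = (p : ℚ) ^ n := by
    rw [one_mul, zpow_natCast]
  rw [hpow]
  have hne : ((p : ℚ) ^ n) ≠ 0 := pow_ne_zero _ hp0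
  push_cast
  field_simp


end Modp
end
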